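/- Let C be a k-dimensional cell in ℝⁿ in the o-minimal sense. Then C is a topological submanifold of ℝⁿ of dimension k; moreover, if C is a C¹ cell then it is a C¹ submanifold of dimension k. -/

import Mathlib

/-- A structure on the ordered field of real numbers: a family of boolean algebras of
subsets of `ℝⁿ`, closed under products and coordinate projections, and containing all
semialgebraic sets (generated by polynomial equalities and inequalities). -/
structure RealStructure where
  defin : (n : ℕ) → Set (Set (Fin n → ℝ))
  empty_mem : ∀ n, ∅ ∈ defin n
  union_mem : ∀ {n : ℕ} {A B : Set (Fin n → ℝ)}, A ∈ defin n → B ∈ defin n → A ∪ B ∈ defin n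
  compl_mem : ∀ {n : ℕ} {A : Set (Fin n → ℝ)}, A ∈ defin n → Aᶜ ∈ defin n
  prod_mem : ∀ {n m : ℕ} {A : Set (Fin n → ℝ)} {B : Set (Fin m → ℝ)},
    A ∈ defin n → B ∈ defin m →
    {x : Fin (n + m) → ℝ | (fun i => x (Fin.castAdd m i)) ∈ A ∧
      (fun i => x (Fin.natAdd n i)) ∈ B} ∈ defin (n + m)
  proj_mem : ∀ {n : ℕ} {A : Set (Fin (n + 1) → ℝ)}, A ∈ defin (n + 1) →
    {x : Fin n → ℝ | ∃ t : ℝ, Fin.snoc x t ∈ A} ∈ defin n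
  polyEq_mem : ∀ {n : ℕ} (p : MvPolynomial (Fin n) ℝ),
    {x : Fin n → ℝ | MvPolynomial.eval x p = 0} ∈ defin n
  polyLt_mem : ∀ {n : ℕ} (p : MvPolynomial (Fin n) ℝ),
    {x : Fin n → ℝ | 0 < MvPolynomial.eval x p} ∈ defin n


/-- Definability of the graph of `f` over `C' ⊆ ℝⁿ`, as a subset of `ℝ^{n+1}`. -/
def DefinableGraphOn (S : RealStructure) {n : ℕ} (C' : Set (Fin n → ℝ))
    (f : (Fin n → ℝ) → ℝ) : Prop :=
  {z : Fin (n + 1) → ℝ | Fin.init z ∈ C' ∧ z (Fin.last n) = f (Fin.init z)} ∈ S.defin (n + 1)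

/-- `f` is C¹ on `C'` in the sense of admitting a C¹ extension to an open neighborhood. -/
def C1On {n : ℕ} (f : (Fin n → ℝ) → ℝ) (C' : Set (Fin n → ℝ)) : Prop :=
  ∃ U : Set (Fin n → ℝ), IsOpen U ∧ C' ⊆ U ∧
    ∃ F : (Fin n → ℝ) → ℝ, ContDiffOn ℝ 1 F U ∧ Set.EqOn f F C'

/-- Cells in `ℝⁿ` (o-minimal sense), with their dimension: points and open intervals in
`ℝ¹`; graphs of continuous definable functions over cells; and bands between continuous
definable functions (possibly `±∞`) over cells. -/
inductive IsCell (S : RealStructure) : (n : ℕ) → ℕ → Set (Fin n → ℝ) → Prop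
  | point (a : ℝ) : IsCell S 1 0 {x | x 0 = a}
  | interval (a b : ℝ) : IsCell S 1 1 {x | a < x 0 ∧ x 0 < b}
  | intervalLeft (b : ℝ) : IsCell S 1 1 {x | x 0 < b}
  | intervalRight (a : ℝ) : IsCell S 1 1 {x | a < x 0}
  | intervalAll : IsCell S 1 1 Set.univ
  | graph {n k : ℕ} {C' : Set (Fin n → ℝ)} (f : (Fin n → ℝ) → ℝ) :
      IsCell S n k C' → ContinuousOn f C' → DefinableGraphOn S C' f →
      IsCell S (n + 1) k {x | Fin.init x ∈ C' ∧ x (Fin.last n) = f (Fin.init x)}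
  | band {n k : ℕ} {C' : Set (Fin n → ℝ)} (f g : (Fin n → ℝ) → ℝ) :
      IsCell S n k C' → ContinuousOn f C' → ContinuousOn g C' →
      DefinableGraphOn S C' f → DefinableGraphOn S C' g → (∀ x ∈ C', f x < g x) →
      IsCell S (n + 1) (k + 1)
        {x | Fin.init x ∈ C' ∧ f (Fin.init x) < x (Fin.last n) ∧ x (Fin.last n) < g (Fin.init x)}
  | bandLeft {n k : ℕ} {C' : Set (Fin n → ℝ)} (g : (Fin n → ℝ) → ℝ) :
      IsCell S n k C' → ContinuousOn g C' → DefinableGraphOn S C' g →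
      IsCell S (n + 1) (k + 1) {x | Fin.init x ∈ C' ∧ x (Fin.last n) < g (Fin.init x)}
  | bandRight {n k : ℕ} {C' : Set (Fin n → ℝ)} (f : (Fin n → ℝ) → ℝ) :
      IsCell S n k C' → ContinuousOn f C' → DefinableGraphOn S C' f →
      IsCell S (n + 1) (k + 1) {x | Fin.init x ∈ C' ∧ f (Fin.init x) < x (Fin.last n)}
  | bandAll {n k : ℕ} {C' : Set (Fin n → ℝ)} :
      IsCell S n k C' → IsCell S (n + 1) (k + 1) {x | Fin.init x ∈ C'}

/-- C¹ cells: as cells, but with the defining functions of class C¹. -/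
inductive IsC1Cell (S : RealStructure) : (n : ℕ) → ℕ → Set (Fin n → ℝ) → Prop
  | point (a : ℝ) : IsC1Cell S 1 0 {x | x 0 = a}
  | interval (a b : ℝ) : IsC1Cell S 1 1 {x | a < x 0 ∧ x 0 < b}
  | intervalLeft (b : ℝ) : IsC1Cell S 1 1 {x | x 0 < b}
  | intervalRight (a : ℝ) : IsC1Cell S 1 1 {x | a < x 0}
  | intervalAll : IsC1Cell S 1 1 Set.univ
  | graph {n k : ℕ} {C' : Set (Fin n → ℝ)} (f : (Fin n → ℝ) → ℝ) :
      IsC1Cell S n k C' → ContinuousOn f C' → C1On f C' → DefinableGraphOn S C' f →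
      IsC1Cell S (n + 1) k {x | Fin.init x ∈ C' ∧ x (Fin.last n) = f (Fin.init x)}
  | band {n k : ℕ} {C' : Set (Fin n → ℝ)} (f g : (Fin n → ℝ) → ℝ) :
      IsC1Cell S n k C' → ContinuousOn f C' → ContinuousOn g C' →
      C1On f C' → C1On g C' →
      DefinableGraphOn S C' f → DefinableGraphOn S C' g → (∀ x ∈ C', f x < g x) →
      IsC1Cell S (n + 1) (k + 1)
        {x | Fin.init x ∈ C' ∧ f (Fin.init x) < x (Fin.last n) ∧ x (Fin.last n) < g (Fin.init x)}
  | bandLeft {n k : ℕ} {C' : Set (Fin n → ℝ)} (g : (Fin n → ℝ) → ℝ) :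
      IsC1Cell S n k C' → ContinuousOn g C' → C1On g C' → DefinableGraphOn S C' g →
      IsC1Cell S (n + 1) (k + 1) {x | Fin.init x ∈ C' ∧ x (Fin.last n) < g (Fin.init x)}
  | bandRight {n k : ℕ} {C' : Set (Fin n → ℝ)} (f : (Fin n → ℝ) → ℝ) :
      IsC1Cell S n k C' → ContinuousOn f C' → C1On f C' → DefinableGraphOn S C' f →
      IsC1Cell S (n + 1) (k + 1) {x | Fin.init x ∈ C' ∧ f (Fin.init x) < x (Fin.last n)}
  | bandAll {n k : ℕ} {C' : Set (Fin n → ℝ)} :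
      IsC1Cell S n k C' → IsC1Cell S (n + 1) (k + 1) {x | Fin.init x ∈ C'}

noncomputable section
open Set Metric
namespace CellSub

/-- The standard slice plane: coordinates `≥ k` vanish. -/
def PL (n k : ℕ) : Set (Fin n → ℝ) := {x | ∀ j : Fin n, k ≤ (j : ℕ) → x j = 0}

/-- The `e`-slice: coordinates `i` with `k ≤ e i` vanish. -/
def QS {n : ℕ} (e : Fin n ≃ Fin n) (k : ℕ) : Set (Fin n → ℝ) :=
  {x | ∀ i : Fin n, k ≤ ((e i : ℕ)) → x i = 0}

/-- Projection onto the `e`-slice. -/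
def PiE {n : ℕ} (e : Fin n ≃ Fin n) (k : ℕ) (x : Fin n → ℝ) : Fin n → ℝ :=
  fun i => if k ≤ ((e i : ℕ)) then 0 else x i

lemma PiE_mem_QS {n : ℕ} (e : Fin n ≃ Fin n) (k : ℕ) (x : Fin n → ℝ) :
    PiE e k x ∈ QS e k := by
  intro i hi; simp [PiE, hi]

lemma PiE_idem {n : ℕ} (e : Fin n ≃ Fin n) (k : ℕ) (x : Fin n → ℝ) :
    PiE e k (PiE e k x) = PiE e k x := by
  funext i; by_cases h : k ≤ ((e i : ℕ)) <;> simp [PiE, h]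

lemma PiE_eq_of_agree {n : ℕ} (e : Fin n ≃ Fin n) (k : ℕ) {x y : Fin n → ℝ}
    (h : ∀ i, ((e i : ℕ)) < k → x i = y i) : PiE e k x = PiE e k y := by
  funext i; by_cases hc : k ≤ ((e i : ℕ))
  · simp [PiE, hc]
  · simp only [PiE, if_neg hc]; exact h i (by omega)

lemma contDiff_PiE {n : ℕ} (e : Fin n ≃ Fin n) (k : ℕ) :
    ContDiff ℝ 1 (PiE e k) := by
  rw [contDiff_pi]
  intro i
  by_cases h : k ≤ ((e i : ℕ))
  · simpa [PiE, h] using contDiff_const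
  · simpa [PiE, h] using (show ContDiff ℝ 1 (fun x : Fin n → ℝ => x i) from (ContinuousLinearMap.proj (R := ℝ) (φ := fun _ : Fin n => ℝ) i).contDiff)

lemma contDiff_init {n : ℕ} : ContDiff ℝ 1 (fun x : Fin (n+1) → ℝ => Fin.init x) := by
  rw [contDiff_pi]
  intro i
  exact (ContinuousLinearMap.proj (R := ℝ) (φ := fun _ : Fin (n+1) => ℝ) (Fin.castSucc i)).contDiff

lemma contDiffOn_snoc {m n : ℕ} {A : (Fin m → ℝ) → Fin n → ℝ} {b : (Fin m → ℝ) → ℝ}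
    {s : Set (Fin m → ℝ)} (hA : ContDiffOn ℝ 1 A s) (hb : ContDiffOn ℝ 1 b s) :
    ContDiffOn ℝ 1 (fun x => (Fin.snoc (A x) (b x) : Fin (n+1) → ℝ)) s := by
  rw [contDiffOn_pi]
  intro j
  induction j using Fin.lastCases with
  | last => simpa using hb
  | cast i => simpa using (contDiffOn_pi.mp hA i)

lemma continuousOn_snoc {m n : ℕ} {A : (Fin m → ℝ) → Fin n → ℝ} {b : (Fin m → ℝ) → ℝ}
    {s : Set (Fin m → ℝ)} (hA : ContinuousOn A s) (hb : ContinuousOn b s) :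
    ContinuousOn (fun x => (Fin.snoc (A x) (b x) : Fin (n+1) → ℝ)) s := by
  apply continuousOn_pi.mpr
  intro j
  induction j using Fin.lastCases with
  | last => simpa using hb
  | cast i =>
      simpa using (continuousOn_pi.mp hA i)

lemma dist_init_le {n : ℕ} (x y : Fin (n+1) → ℝ) :
    dist (Fin.init x) (Fin.init y) ≤ dist x y := by
  refine (dist_pi_le_iff dist_nonneg).mpr fun i => ?_
  exact dist_le_pi_dist x y (Fin.castSucc i)

lemma dist_snoc_le {n : ℕ} (a b : Fin n → ℝ) (s t : ℝ) :
    dist (Fin.snoc a s : Fin (n+1) → ℝ) (Fin.snoc b t) ≤ max (dist a b) (dist s t) := by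
  refine (dist_pi_le_iff (le_max_iff.2 (Or.inl dist_nonneg))).mpr fun j => ?_
  induction j using Fin.lastCases with
  | last => simpa using le_max_right _ _
  | cast i =>
      simp only [Fin.snoc_castSucc]
      exact le_trans (dist_le_pi_dist a b i) (le_max_left _ _)

/-- image of an open subset under the chart map is open -/
lemma image_open_of_chart {n : ℕ} {U : Set (Fin n → ℝ)} {Φ Ψ : (Fin n → ℝ) → (Fin n → ℝ)}
    (hU : IsOpen U) (hΨc : ContinuousOn Ψ U) (hΦU : Φ '' U = U)
    (hinv : ∀ x ∈ U, Ψ (Φ x) = x) {O : Set (Fin n → ℝ)} (hO : IsOpen O) (hOU : O ⊆ U) :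
    IsOpen (Φ '' O) := by
  have himg : Φ '' O = U ∩ Ψ ⁻¹' O := by
    ext y; constructor
    · rintro ⟨x, hx, rfl⟩
      refine ⟨hΦU ▸ ⟨x, hOU hx, rfl⟩, ?_⟩
      simpa [hinv x (hOU hx)] using hx
    · rintro ⟨hyU, hyΨ⟩
      rcases (hΦU.symm ▸ hyU : y ∈ Φ '' U) with ⟨x, hxU, rfl⟩
      have : Ψ (Φ x) ∈ O := hyΨ
      rw [hinv x hxU] at this
      exact ⟨x, this, rfl⟩
  rw [himg]
  exact hΨc.isOpen_inter_preimage hU hO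

/-- open sets of the form {x ∈ U | f x < g x} -/
lemma isOpen_lt_on {n : ℕ} {U : Set (Fin n → ℝ)} {f g : (Fin n → ℝ) → ℝ}
    (hU : IsOpen U) (hf : ContinuousOn f U) (hg : ContinuousOn g U) :
    IsOpen {x | x ∈ U ∧ f x < g x} := by
  have : {x | x ∈ U ∧ f x < g x} = U ∩ (fun x => g x - f x) ⁻¹' (Ioi 0) := by
    ext x; simp only [mem_setOf_eq, mem_inter_iff, mem_preimage, mem_Ioi, sub_pos]
  rw [this]
  exact ((hg.sub hf)).isOpen_inter_preimage hU isOpen_Ioi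





/-- Extend a permutation of `Fin n` to `Fin (n+1)` fixing `last`. -/
def graphEquiv {n : ℕ} (e : Fin n ≃ Fin n) : Fin (n+1) ≃ Fin (n+1) where
  toFun := Fin.lastCases (Fin.last n) (fun i => (e i).castSucc)
  invFun := Fin.lastCases (Fin.last n) (fun i => (e.symm i).castSucc)
  left_inv j := by
    induction j using Fin.lastCases with
    | last => simp
    | cast i => simp
  right_inv j := by
    induction j using Fin.lastCases with
    | last => simp
    | cast i => simp

@[simp] lemma graphEquiv_castSucc {n : ℕ} (e : Fin n ≃ Fin n) (i : Fin n) :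
    graphEquiv e (Fin.castSucc i) = Fin.castSucc (e i) := by
  simp [graphEquiv]

@[simp] lemma graphEquiv_last {n : ℕ} (e : Fin n ≃ Fin n) :
    graphEquiv e (Fin.last n) = Fin.last n := by
  simp [graphEquiv]

/-- Permutation of `Fin (n+1)` for the band step: on `castSucc i`, graph slots
(`k ≤ e i`) are shifted up by one, the new last coordinate goes to position `k`. -/
def bandFun {n : ℕ} (e : Fin n ≃ Fin n) (k : ℕ) (hk : k ≤ n) : Fin (n+1) → Fin (n+1) :=
  Fin.lastCases ⟨k, by omega⟩
    (fun i => if ((e i : ℕ)) < k then ⟨(e i : ℕ), by have := (e i).isLt; omega⟩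
      else ⟨(e i : ℕ) + 1, by have := (e i).isLt; omega⟩)

lemma bandFun_injective {n : ℕ} (e : Fin n ≃ Fin n) (k : ℕ) (hk : k ≤ n) :
    Function.Injective (bandFun e k hk) := by
  intro a b hab
  induction a using Fin.lastCases with
  | last =>
      induction b using Fin.lastCases with
      | last => rfl
      | cast j =>
          exfalso
          simp only [bandFun, Fin.lastCases_last, Fin.lastCases_castSucc] at hab
          by_cases hj : ((e j : ℕ)) < k
          · rw [if_pos hj] at hab
            have := congrArg (Fin.val) hab; simp at this; omega
          · rw [if_neg hj] at hab
            have := congrArg (Fin.val) hab; simp at this; omega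
  | cast i =>
      induction b using Fin.lastCases with
      | last =>
          exfalso
          simp only [bandFun, Fin.lastCases_last, Fin.lastCases_castSucc] at hab
          by_cases hi : ((e i : ℕ)) < k
          · rw [if_pos hi] at hab
            have := congrArg (Fin.val) hab; simp at this; omega
          · rw [if_neg hi] at hab
            have := congrArg (Fin.val) hab; simp at this; omega
      | cast j =>
          simp only [bandFun, Fin.lastCases_castSucc] at hab
          have hval := congrArg (Fin.val) hab
          have heq : ((e i : ℕ)) = ((e j : ℕ)) := by
            by_cases hi : ((e i : ℕ)) < k <;> by_cases hj : ((e j : ℕ)) < k <;>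
              simp [hi, hj] at hval <;> omega
          have : e i = e j := Fin.ext heq
          have : i = j := e.injective this
          rw [this]

noncomputable def bandEquiv {n : ℕ} (e : Fin n ≃ Fin n) (k : ℕ) (hk : k ≤ n) : Fin (n+1) ≃ Fin (n+1) :=
  Equiv.ofBijective _ ((Finite.injective_iff_bijective).mp (bandFun_injective e k hk))

lemma bandEquiv_apply {n : ℕ} (e : Fin n ≃ Fin n) (k : ℕ) (hk : k ≤ n) (j : Fin (n+1)) :
    bandEquiv e k hk j = bandFun e k hk j := rfl

lemma bandEquiv_castSucc_val {n : ℕ} (e : Fin n ≃ Fin n) (k : ℕ) (hk : k ≤ n) (i : Fin n) :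
    ((bandEquiv e k hk (Fin.castSucc i) : Fin (n+1)) : ℕ)
      = if ((e i : ℕ)) < k then ((e i : ℕ)) else ((e i : ℕ)) + 1 := by
  rw [bandEquiv_apply]
  simp only [bandFun, Fin.lastCases_castSucc]
  by_cases h : ((e i : ℕ)) < k <;> simp [h]

lemma bandEquiv_cond {n : ℕ} (e : Fin n ≃ Fin n) (k : ℕ) (hk : k ≤ n) (i : Fin n) :
    (k + 1 ≤ ((bandEquiv e k hk (Fin.castSucc i) : Fin (n+1)) : ℕ)) ↔ (k ≤ ((e i : ℕ))) := by
  rw [bandEquiv_castSucc_val]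
  by_cases h : ((e i : ℕ)) < k <;> simp [h] <;> omega

@[simp] lemma bandEquiv_last_val {n : ℕ} (e : Fin n ≃ Fin n) (k : ℕ) (hk : k ≤ n) :
    ((bandEquiv e k hk (Fin.last n) : Fin (n+1)) : ℕ) = k := by
  rw [bandEquiv_apply]
  simp [bandFun]


end CellSub

namespace CellSub
open Set Metric

variable {n k : ℕ}

/-- A global straightening chart for a set `C ⊆ ℝⁿ`. -/
structure Chart (n k : ℕ) (C : Set (Fin n → ℝ)) where
  e : Fin n ≃ Fin n
  U : Set (Fin n → ℝ)
  Φ : (Fin n → ℝ) → (Fin n → ℝ)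
  Ψ : (Fin n → ℝ) → (Fin n → ℝ)
  hkn : k ≤ n
  hUo : IsOpen U
  hCU : C ⊆ U
  hΦc : ContinuousOn Φ U
  hΨc : ContinuousOn Ψ U
  hΦU : Φ '' U = U
  hinv : ∀ x ∈ U, Ψ (Φ x) = x
  hpres : ∀ x ∈ U, ∀ i : Fin n, ((e i : ℕ)) < k → Φ x i = x i ∧ Ψ x i = x i
  hPiU : ∀ x ∈ U, PiE e k x ∈ U
  himg : Φ '' C = U ∩ QS e k

namespace Chart

variable {C : Set (Fin n → ℝ)} (ch : Chart n k C)

lemma hΦmem : ∀ x ∈ ch.U, ch.Φ x ∈ ch.U := by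
  intro x hx
  rw [← ch.hΦU]
  exact mem_image_of_mem _ hx

lemma hΨU : ∀ x ∈ ch.U, ch.Ψ x ∈ ch.U ∧ ch.Φ (ch.Ψ x) = x := by
  intro x hx
  rw [← ch.hΦU] at hx
  obtain ⟨y, hy, rfl⟩ := hx
  rw [ch.hinv y hy]
  exact ⟨hy, rfl⟩

lemma hCiff : ∀ x ∈ ch.U, (x ∈ C ↔ ch.Φ x ∈ QS ch.e k) := by
  intro x hx
  constructor
  · intro hxC
    have : ch.Φ x ∈ ch.Φ '' C := mem_image_of_mem _ hxC
    rw [ch.himg] at this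
    exact this.2
  · intro hQ
    have : ch.Φ x ∈ ch.U ∩ QS ch.e k := ⟨ch.hΦmem x hx, hQ⟩
    rw [← ch.himg] at this
    obtain ⟨y, hyC, hEq⟩ := this
    have : ch.Ψ (ch.Φ x) = ch.Ψ (ch.Φ y) := by rw [hEq]
    rw [ch.hinv x hx, ch.hinv y (ch.hCU hyC)] at this
    rwa [this]

/-- retraction of `U` onto `C`. -/
def rho (x : Fin n → ℝ) : Fin n → ℝ := ch.Ψ (PiE ch.e k x)

lemma rho_mem : ∀ x ∈ ch.U, ch.rho x ∈ C := by
  intro x hx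
  have h1 : PiE ch.e k x ∈ ch.U ∩ QS ch.e k := ⟨ch.hPiU x hx, PiE_mem_QS _ _ _⟩
  rw [← ch.himg] at h1
  obtain ⟨y, hyC, hEq⟩ := h1
  unfold rho
  rw [← hEq, ch.hinv y (ch.hCU hyC)]
  exact hyC

lemma PiE_eq_Phi : ∀ x ∈ C, PiE ch.e k x = ch.Φ x := by
  intro x hx
  have hQ : ch.Φ x ∈ QS ch.e k := ((ch.hCiff x (ch.hCU hx)).mp hx)
  funext i
  by_cases hc : k ≤ ((ch.e i : ℕ))
  · simp only [PiE, if_pos hc]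
    exact (hQ i hc).symm
  · simp only [PiE, if_neg hc]
    exact ((ch.hpres x (ch.hCU hx) i (by omega)).1).symm

lemma rho_id : ∀ x ∈ C, ch.rho x = x := by
  intro x hx
  unfold rho
  rw [ch.PiE_eq_Phi x hx]
  exact ch.hinv x (ch.hCU hx)

lemma rho_cont : ContinuousOn ch.rho ch.U := by
  apply ch.hΨc.comp ((contDiff_PiE ch.e k).continuous.continuousOn)
  exact fun x hx => ch.hPiU x hx

lemma PiE_Phi : ∀ x ∈ ch.U, PiE ch.e k (ch.Φ x) = PiE ch.e k x :=
  fun x hx => PiE_eq_of_agree _ _ (fun i hi => (ch.hpres x hx i hi).1)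

lemma PiE_Psi : ∀ x ∈ ch.U, PiE ch.e k (ch.Ψ x) = PiE ch.e k x :=
  fun x hx => PiE_eq_of_agree _ _ (fun i hi => (ch.hpres x hx i hi).2)

lemma rho_Phi : ∀ x ∈ ch.U, ch.rho (ch.Φ x) = ch.rho x := by
  intro x hx; unfold rho; rw [ch.PiE_Phi x hx]

lemma rho_Psi : ∀ x ∈ ch.U, ch.rho (ch.Ψ x) = ch.rho x := by
  intro x hx; unfold rho; rw [ch.PiE_Psi x hx]

lemma rho_PiE : ∀ x, ch.rho (PiE ch.e k x) = ch.rho x := by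
  intro x; unfold rho; rw [PiE_idem]

lemma isClosed_QS (e : Fin n ≃ Fin n) (k : ℕ) : IsClosed (QS e k) := by
  have : QS e k = ⋂ i : Fin n, {x : Fin n → ℝ | k ≤ ((e i : ℕ)) → x i = 0} := by
    ext x; simp [QS, Set.mem_iInter]
  rw [this]
  apply isClosed_iInter
  intro i
  by_cases hc : k ≤ ((e i : ℕ))
  · have : {x : Fin n → ℝ | k ≤ ((e i : ℕ)) → x i = 0} = (fun x : Fin n → ℝ => x i) ⁻¹' {0} := by
      ext x; simp [hc]
    rw [this]
    exact IsClosed.preimage (continuous_apply i) isClosed_singleton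
  · have : {x : Fin n → ℝ | k ≤ ((e i : ℕ)) → x i = 0} = univ := by
      ext x; simp [hc]
    rw [this]; exact isClosed_univ

lemma isOpen_diff : IsOpen (ch.U \ C) := by
  have : ch.U \ C = ch.U ∩ ch.Φ ⁻¹' (QS ch.e k)ᶜ := by
    ext x
    constructor
    · rintro ⟨hxU, hxC⟩
      exact ⟨hxU, fun hQ => hxC ((ch.hCiff x hxU).mpr hQ)⟩
    · rintro ⟨hxU, hQ⟩
      exact ⟨hxU, fun hC => hQ ((ch.hCiff x hxU).mp hC)⟩
  rw [this]
  exact ch.hΦc.isOpen_inter_preimage ch.hUo (isClosed_QS ch.e k).isOpen_compl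

end Chart

/-- A C¹ straightening chart. -/
structure Chart1 (n k : ℕ) (C : Set (Fin n → ℝ)) extends Chart n k C where
  hΦd : ContDiffOn ℝ 1 toChart.Φ toChart.U
  hΨd : ContDiffOn ℝ 1 toChart.Ψ toChart.U

/-- The additional invariant needed for the local C¹ chart construction. -/
def LB {n k : ℕ} {C : Set (Fin n → ℝ)} (ch : Chart n k C) : Prop :=
  (∃ c r, 0 < r ∧ c ∈ PL n k ∧ closedBall c r ⊆ ch.U) ∨
  (∃ s δ, 0 < δ ∧ s ∈ PL n k ∧ ∀ x ∈ ball s δ, x ∉ C ∧ x ∉ QS ch.e k)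

end CellSub

namespace CellSub
open Set Metric

variable {n k : ℕ} {C' : Set (Fin n → ℝ)}

@[simp] lemma init_apply (x : Fin (n+1) → ℝ) (i : Fin n) :
    Fin.init x i = x (Fin.castSucc i) := rfl

section GraphCore

variable (ch : Chart n k C') (fh : (Fin n → ℝ) → ℝ)

/-- chart map for the graph step -/
def gPhi : (Fin (n+1) → ℝ) → (Fin (n+1) → ℝ) :=
  fun x => Fin.snoc (ch.Φ (Fin.init x)) (x (Fin.last n) - fh (Fin.init x))

def gPsi : (Fin (n+1) → ℝ) → (Fin (n+1) → ℝ) :=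
  fun x => Fin.snoc (ch.Ψ (Fin.init x)) (x (Fin.last n) + fh (ch.Ψ (Fin.init x)))

def gU : Set (Fin (n+1) → ℝ) := {x | Fin.init x ∈ ch.U}

lemma gU_open : IsOpen (gU ch) :=
  ch.hUo.preimage contDiff_init.continuous

lemma gPhi_mem : ∀ x ∈ gU ch, gPhi ch fh x ∈ gU ch := by
  intro x hx
  show Fin.init (gPhi ch fh x) ∈ ch.U
  simp only [gPhi, Fin.init_snoc]
  exact ch.hΦmem _ hx

lemma gPsi_mem : ∀ x ∈ gU ch, gPsi ch fh x ∈ gU ch := by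
  intro x hx
  show Fin.init (gPsi ch fh x) ∈ ch.U
  simp only [gPsi, Fin.init_snoc]
  exact (ch.hΨU _ hx).1

lemma gPhi_gPsi : ∀ y ∈ gU ch, gPhi ch fh (gPsi ch fh y) = y := by
  intro y hy
  unfold gPhi gPsi
  simp only [Fin.init_snoc, Fin.snoc_last]
  rw [(ch.hΨU _ hy).2]
  rw [add_sub_cancel_right]
  exact Fin.snoc_init_self y

lemma gPsi_gPhi : ∀ x ∈ gU ch, gPsi ch fh (gPhi ch fh x) = x := by
  intro x hx
  unfold gPhi gPsi
  simp only [Fin.init_snoc, Fin.snoc_last]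
  rw [ch.hinv _ hx]
  rw [sub_add_cancel]
  exact Fin.snoc_init_self x

def graphCore (hfh : ContinuousOn fh ch.U)
    (CG : Set (Fin (n+1) → ℝ))
    (hCG : ∀ x, x ∈ CG ↔ (Fin.init x ∈ C' ∧ x (Fin.last n) = fh (Fin.init x))) :
    Chart (n+1) k CG where
  e := graphEquiv ch.e
  U := gU ch
  Φ := gPhi ch fh
  Ψ := gPsi ch fh
  hkn := ch.hkn.trans (Nat.le_succ n)
  hUo := gU_open ch
  hCU := by
    intro x hx
    exact ch.hCU ((hCG x).mp hx).1
  hΦc := by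
    apply continuousOn_snoc
    · exact ch.hΦc.comp (contDiff_init.continuous.continuousOn) (fun x hx => hx)
    · exact ((continuous_apply (Fin.last n)).continuousOn).sub
        (hfh.comp (contDiff_init.continuous.continuousOn) (fun x hx => hx))
  hΨc := by
    apply continuousOn_snoc
    · exact ch.hΨc.comp (contDiff_init.continuous.continuousOn) (fun x hx => hx)
    · apply ((continuous_apply (Fin.last n)).continuousOn).add
      apply hfh.comp
      · exact ch.hΨc.comp (contDiff_init.continuous.continuousOn) (fun x hx => hx)
      · exact fun x hx => (ch.hΨU _ hx).1
  hΦU := by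
    apply Subset.antisymm
    · rintro y ⟨x, hx, rfl⟩
      exact gPhi_mem ch fh x hx
    · intro y hy
      exact ⟨gPsi ch fh y, gPsi_mem ch fh y hy, gPhi_gPsi ch fh y hy⟩
  hinv := gPsi_gPhi ch fh
  hpres := by
    intro x hx i hi
    induction i using Fin.lastCases with
    | last =>
        exfalso
        rw [graphEquiv_last] at hi
        simp only [Fin.val_last] at hi
        have := ch.hkn
        omega
    | cast i =>
        rw [graphEquiv_castSucc] at hi
        simp only [Fin.coe_castSucc] at hi
        constructor
        · show gPhi ch fh x (Fin.castSucc i) = _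
          simp only [gPhi, Fin.snoc_castSucc]
          exact (ch.hpres _ hx i hi).1
        · show gPsi ch fh x (Fin.castSucc i) = _
          simp only [gPsi, Fin.snoc_castSucc]
          exact (ch.hpres _ hx i hi).2
  hPiU := by
    intro x hx
    show Fin.init (PiE (graphEquiv ch.e) k x) ∈ ch.U
    have : Fin.init (PiE (graphEquiv ch.e) k x) = PiE ch.e k (Fin.init x) := by
      funext i
      simp only [init_apply, PiE, graphEquiv_castSucc, Fin.coe_castSucc]
    rw [this]
    exact ch.hPiU _ hx
  himg := by
    apply Subset.antisymm
    · rintro y ⟨x, hx, rfl⟩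
      obtain ⟨hxC, hxl⟩ := (hCG x).mp hx
      have hxU : Fin.init x ∈ ch.U := ch.hCU hxC
      refine ⟨gPhi_mem ch fh x hxU, ?_⟩
      intro j hj
      induction j using Fin.lastCases with
      | last =>
          show gPhi ch fh x (Fin.last n) = 0
          simp only [gPhi, Fin.snoc_last, hxl, sub_self]
      | cast i =>
          rw [graphEquiv_castSucc, Fin.coe_castSucc] at hj
          show gPhi ch fh x (Fin.castSucc i) = 0
          simp only [gPhi, Fin.snoc_castSucc]
          exact ((ch.hCiff _ hxU).mp hxC) i hj
    · rintro y ⟨hyU, hyQ⟩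
      have hinitQ : Fin.init y ∈ QS ch.e k := by
        intro i hi
        have := hyQ (Fin.castSucc i) (by rw [graphEquiv_castSucc, Fin.coe_castSucc]; exact hi)
        exact this
      have hinitC : ch.Ψ (Fin.init y) ∈ C' := by
        have h1 : Fin.init y ∈ ch.U ∩ QS ch.e k := ⟨hyU, hinitQ⟩
        rw [← ch.himg] at h1
        obtain ⟨z, hzC, hEq⟩ := h1
        rw [← hEq, ch.hinv z (ch.hCU hzC)]
        exact hzC
      have hylast : y (Fin.last n) = 0 := by
        apply hyQ (Fin.last n)
        rw [graphEquiv_last]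
        simp only [Fin.val_last]
        exact ch.hkn
      refine ⟨gPsi ch fh y, ?_, gPhi_gPsi ch fh y hyU⟩
      rw [hCG]
      constructor
      · simp only [gPsi, Fin.init_snoc]
        exact hinitC
      · simp only [gPsi, Fin.init_snoc, Fin.snoc_last, hylast, zero_add]

end GraphCore

section BandCore

variable (ch : Chart n k C')

def bPhi : (Fin (n+1) → ℝ) → (Fin (n+1) → ℝ) :=
  fun x => Fin.snoc (ch.Φ (Fin.init x)) (x (Fin.last n))

def bPsi : (Fin (n+1) → ℝ) → (Fin (n+1) → ℝ) :=
  fun x => Fin.snoc (ch.Ψ (Fin.init x)) (x (Fin.last n))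

def bU (R : (Fin n → ℝ) → ℝ → Prop) : Set (Fin (n+1) → ℝ) :=
  {x | Fin.init x ∈ ch.U ∧ R (Fin.init x) (x (Fin.last n))}

def bandCore (R : (Fin n → ℝ) → ℝ → Prop)
    (hRopen : IsOpen (bU ch R))
    (hRΦ : ∀ x ∈ ch.U, ∀ t, R x t ↔ R (ch.Φ x) t)
    (hRΨ : ∀ x ∈ ch.U, ∀ t, R x t ↔ R (ch.Ψ x) t)
    (hRPi : ∀ x ∈ ch.U, ∀ t, R x t ↔ R (PiE ch.e k x) t)
    (CB : Set (Fin (n+1) → ℝ))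
    (hCB : ∀ x, x ∈ CB ↔ (Fin.init x ∈ C' ∧ R (Fin.init x) (x (Fin.last n)))) :
    Chart (n+1) (k+1) CB where
  e := bandEquiv ch.e k ch.hkn
  U := bU ch R
  Φ := bPhi ch
  Ψ := bPsi ch
  hkn := Nat.succ_le_succ ch.hkn
  hUo := hRopen
  hCU := by
    rintro x hx
    obtain ⟨h1, h2⟩ := (hCB x).mp hx
    exact ⟨ch.hCU h1, h2⟩
  hΦc := by
    apply continuousOn_snoc
    · exact ch.hΦc.comp (contDiff_init.continuous.continuousOn) (fun x hx => hx.1)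
    · exact (continuous_apply (Fin.last n)).continuousOn
  hΨc := by
    apply continuousOn_snoc
    · exact ch.hΨc.comp (contDiff_init.continuous.continuousOn) (fun x hx => hx.1)
    · exact (continuous_apply (Fin.last n)).continuousOn
  hΦU := by
    apply Subset.antisymm
    · rintro y ⟨x, ⟨hxU, hxR⟩, rfl⟩
      constructor
      · simp only [bPhi, Fin.init_snoc]
        exact ch.hΦmem _ hxU
      · simp only [bPhi, Fin.init_snoc, Fin.snoc_last]
        exact (hRΦ _ hxU _).mp hxR
    · rintro y ⟨hyU, hyR⟩
      refine ⟨bPsi ch y, ⟨?_, ?_⟩, ?_⟩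
      · simp only [bPsi, Fin.init_snoc]
        exact (ch.hΨU _ hyU).1
      · simp only [bPsi, Fin.init_snoc, Fin.snoc_last]
        exact (hRΨ _ hyU _).mp hyR
      · simp only [bPhi, bPsi, Fin.init_snoc, Fin.snoc_last, (ch.hΨU _ hyU).2]
        exact Fin.snoc_init_self y
  hinv := by
    rintro x ⟨hxU, hxR⟩
    simp only [bPhi, bPsi, Fin.init_snoc, Fin.snoc_last, ch.hinv _ hxU]
    exact Fin.snoc_init_self x
  hpres := by
    rintro x ⟨hxU, hxR⟩ i hi
    induction i using Fin.lastCases with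
    | last =>
        constructor
        · show bPhi ch x (Fin.last n) = _
          simp only [bPhi, Fin.snoc_last]
        · show bPsi ch x (Fin.last n) = _
          simp only [bPsi, Fin.snoc_last]
    | cast i =>
        have hi' : ((ch.e i : ℕ)) < k := by
          have := (bandEquiv_cond ch.e k ch.hkn i)
          omega
        constructor
        · show bPhi ch x (Fin.castSucc i) = _
          simp only [bPhi, Fin.snoc_castSucc]
          exact (ch.hpres _ hxU i hi').1
        · show bPsi ch x (Fin.castSucc i) = _
          simp only [bPsi, Fin.snoc_castSucc]
          exact (ch.hpres _ hxU i hi').2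
  hPiU := by
    rintro x ⟨hxU, hxR⟩
    have hsplit : PiE (bandEquiv ch.e k ch.hkn) (k+1) x
        = Fin.snoc (PiE ch.e k (Fin.init x)) (x (Fin.last n)) := by
      funext j
      induction j using Fin.lastCases with
      | last =>
          rw [Fin.snoc_last]
          simp only [PiE]
          rw [if_neg (by rw [bandEquiv_last_val]; omega)]
      | cast i =>
          rw [Fin.snoc_castSucc]
          simp only [PiE, init_apply]
          by_cases hc : k ≤ ((ch.e i : ℕ))
          · rw [if_pos (by rw [bandEquiv_cond]; exact hc), if_pos hc]
          · rw [if_neg (by rw [bandEquiv_cond]; exact hc), if_neg hc]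
    rw [hsplit]
    constructor
    · rw [Fin.init_snoc]
      exact ch.hPiU _ hxU
    · simp only [Fin.init_snoc, Fin.snoc_last]
      exact (hRPi _ hxU _).mp hxR
  himg := by
    apply Subset.antisymm
    · rintro y ⟨x, hx, rfl⟩
      obtain ⟨hxC, hxR⟩ := (hCB x).mp hx
      have hxU : Fin.init x ∈ ch.U := ch.hCU hxC
      refine ⟨⟨?_, ?_⟩, ?_⟩
      · simp only [bPhi, Fin.init_snoc]
        exact ch.hΦmem _ hxU
      · simp only [bPhi, Fin.init_snoc, Fin.snoc_last]
        exact (hRΦ _ hxU _).mp hxR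
      · intro j hj
        induction j using Fin.lastCases with
        | last =>
            exfalso
            rw [bandEquiv_last_val] at hj
            omega
        | cast i =>
            rw [bandEquiv_cond] at hj
            show bPhi ch x (Fin.castSucc i) = 0
            simp only [bPhi, Fin.snoc_castSucc]
            exact ((ch.hCiff _ hxU).mp hxC) i hj
    · rintro y ⟨⟨hyU, hyR⟩, hyQ⟩
      have hinitQ : Fin.init y ∈ QS ch.e k := by
        intro i hi
        exact hyQ (Fin.castSucc i) (by rw [bandEquiv_cond]; exact hi)
      have hinitC : ch.Ψ (Fin.init y) ∈ C' := by
        have h1 : Fin.init y ∈ ch.U ∩ QS ch.e k := ⟨hyU, hinitQ⟩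
        rw [← ch.himg] at h1
        obtain ⟨z, hzC, hEq⟩ := h1
        rw [← hEq, ch.hinv z (ch.hCU hzC)]
        exact hzC
      refine ⟨bPsi ch y, ?_, ?_⟩
      · rw [hCB]
        constructor
        · simp only [bPsi, Fin.init_snoc]; exact hinitC
        · simp only [bPsi, Fin.init_snoc, Fin.snoc_last]
          exact (hRΨ _ hyU _).mp hyR
      · simp only [bPhi, bPsi, Fin.init_snoc, Fin.snoc_last, (ch.hΨU _ hyU).2]
        exact Fin.snoc_init_self y

end BandCore

end CellSub

namespace CellSub
open Set Metric

variable {n k : ℕ}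

def pointChart (a : ℝ) : Chart 1 0 {x : Fin 1 → ℝ | x 0 = a} where
  e := Equiv.refl _
  U := univ
  Φ := fun x j => x j - a
  Ψ := fun x j => x j + a
  hkn := by omega
  hUo := isOpen_univ
  hCU := subset_univ _
  hΦc := (continuous_pi fun j => (continuous_apply j).sub continuous_const).continuousOn
  hΨc := (continuous_pi fun j => (continuous_apply j).add continuous_const).continuousOn
  hΦU := by
    rw [Set.image_univ, Set.range_eq_univ]
    intro y
    exact ⟨fun j => y j + a, by funext j; ring⟩
  hinv := by intro x _; funext j; simp
  hpres := by intro x _ i hi; omega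
  hPiU := fun x _ => mem_univ _
  himg := by
    apply Subset.antisymm
    · rintro y ⟨x, hx, rfl⟩
      refine ⟨mem_univ _, fun i _ => ?_⟩
      have hx0 : x 0 = a := hx
      have : i = 0 := Fin.eq_zero i
      rw [this]
      show x 0 - a = 0
      rw [hx0]; ring
    · rintro y ⟨-, hQ⟩
      refine ⟨fun j => y j + a, ?_, ?_⟩
      · show y 0 + a = a
        rw [hQ 0 (by omega)]; ring
      · funext j; ring

def intervalChart (D : Set (Fin 1 → ℝ)) (hD : IsOpen D) : Chart 1 1 D where
  e := Equiv.refl _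
  U := D
  Φ := id
  Ψ := id
  hkn := le_refl 1
  hUo := hD
  hCU := subset_refl _
  hΦc := continuousOn_id
  hΨc := continuousOn_id
  hΦU := Set.image_id _
  hinv := fun x _ => rfl
  hpres := fun x _ i _ => ⟨rfl, rfl⟩
  hPiU := by
    intro x hx
    have : PiE (Equiv.refl (Fin 1)) 1 x = x := by
      funext i
      simp only [PiE, Equiv.refl_apply]
      exact if_neg (show ¬ (1 ≤ (i : ℕ)) by have := i.isLt; omega)
    rwa [this]
  himg := by
    have : QS (Equiv.refl (Fin 1)) 1 = univ := by
      ext x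
      simp only [QS, Equiv.refl_apply, mem_setOf_eq, mem_univ, iff_true]
      intro i hi
      exact absurd hi (by have := i.isLt; omega)
    rw [this, Set.image_id, Set.inter_univ]

theorem isCell_chart {S : RealStructure} {n k : ℕ} {C : Set (Fin n → ℝ)}
    (h : IsCell S n k C) : Nonempty (Chart n k C) := by
  induction h with
  | point a => exact ⟨pointChart a⟩
  | interval a b =>
      exact ⟨intervalChart _ ((isOpen_lt continuous_const (continuous_apply 0)).inter
        (isOpen_lt (continuous_apply 0) continuous_const))⟩
  | intervalLeft b =>
      exact ⟨intervalChart _ (isOpen_lt (continuous_apply 0) continuous_const)⟩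
  | intervalRight a =>
      exact ⟨intervalChart _ (isOpen_lt continuous_const (continuous_apply 0))⟩
  | intervalAll => exact ⟨intervalChart _ isOpen_univ⟩
  | @graph n' k' C' f hcell hf hdef ih =>
      obtain ⟨ch⟩ := ih
      refine ⟨graphCore ch (fun x => f (ch.rho x))
        (hf.comp ch.rho_cont ch.rho_mem) _ fun x => ?_⟩
      constructor
      · rintro ⟨h1, h2⟩
        refine ⟨h1, ?_⟩
        simp only [ch.rho_id _ h1]
        exact h2
      · rintro ⟨h1, h2⟩
        simp only [ch.rho_id _ h1] at h2
        exact ⟨h1, h2⟩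
  | @band n' k' C' f g hcell hf hg hdf hdg hfg ih =>
      obtain ⟨ch⟩ := ih
      refine ⟨bandCore ch
        (fun x' t => f (ch.rho x') < t ∧ t < g (ch.rho x')) ?_ ?_ ?_ ?_ _ fun x => ?_⟩
      · have hset : bU ch (fun x' t => f (ch.rho x') < t ∧ t < g (ch.rho x'))
            = {x | x ∈ gU ch ∧ f (ch.rho (Fin.init x)) < x (Fin.last n')}
              ∩ {x | x ∈ gU ch ∧ x (Fin.last n') < g (ch.rho (Fin.init x))} := by
          ext x
          simp only [bU, gU, mem_setOf_eq, mem_inter_iff]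
          tauto
        rw [hset]
        have hrc : ContinuousOn (fun x : Fin (n'+1) → ℝ => ch.rho (Fin.init x)) (gU ch) :=
          ch.rho_cont.comp (contDiff_init.continuous.continuousOn) (fun x hx => hx)
        exact (isOpen_lt_on (gU_open ch)
            ((hf.comp hrc (fun x hx => ch.rho_mem _ hx)))
            ((continuous_apply (Fin.last n')).continuousOn)).inter
          (isOpen_lt_on (gU_open ch)
            ((continuous_apply (Fin.last n')).continuousOn)
            ((hg.comp hrc (fun x hx => ch.rho_mem _ hx))))
      · intro x hx t; simp only [ch.rho_Phi _ hx]
      · intro x hx t; simp only [ch.rho_Psi _ hx]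
      · intro x hx t; simp only [ch.rho_PiE]
      · constructor
        · rintro ⟨h1, h2, h3⟩
          refine ⟨h1, ?_⟩
          simp only [ch.rho_id _ h1]
          exact ⟨h2, h3⟩
        · rintro ⟨h1, h23⟩
          simp only [ch.rho_id _ h1] at h23
          exact ⟨h1, h23.1, h23.2⟩
  | @bandLeft n' k' C' g hcell hg hdef ih =>
      obtain ⟨ch⟩ := ih
      refine ⟨bandCore ch (fun x' t => t < g (ch.rho x')) ?_ ?_ ?_ ?_ _ fun x => ?_⟩
      · have hset : bU ch (fun x' t => t < g (ch.rho x'))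
            = {x | x ∈ gU ch ∧ x (Fin.last n') < g (ch.rho (Fin.init x))} := by
          ext x; simp only [bU, gU, mem_setOf_eq]
        rw [hset]
        have hrc : ContinuousOn (fun x : Fin (n'+1) → ℝ => ch.rho (Fin.init x)) (gU ch) :=
          ch.rho_cont.comp (contDiff_init.continuous.continuousOn) (fun x hx => hx)
        exact isOpen_lt_on (gU_open ch)
            ((continuous_apply (Fin.last n')).continuousOn)
            ((hg.comp hrc (fun x hx => ch.rho_mem _ hx)))
      · intro x hx t; simp only [ch.rho_Phi _ hx]
      · intro x hx t; simp only [ch.rho_Psi _ hx]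
      · intro x hx t; simp only [ch.rho_PiE]
      · constructor
        · rintro ⟨h1, h2⟩
          refine ⟨h1, ?_⟩
          simp only [ch.rho_id _ h1]
          exact h2
        · rintro ⟨h1, h2⟩
          simp only [ch.rho_id _ h1] at h2
          exact ⟨h1, h2⟩
  | @bandRight n' k' C' f hcell hf hdef ih =>
      obtain ⟨ch⟩ := ih
      refine ⟨bandCore ch (fun x' t => f (ch.rho x') < t) ?_ ?_ ?_ ?_ _ fun x => ?_⟩
      · have hset : bU ch (fun x' t => f (ch.rho x') < t)
            = {x | x ∈ gU ch ∧ f (ch.rho (Fin.init x)) < x (Fin.last n')} := by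
          ext x; simp only [bU, gU, mem_setOf_eq]
        rw [hset]
        have hrc : ContinuousOn (fun x : Fin (n'+1) → ℝ => ch.rho (Fin.init x)) (gU ch) :=
          ch.rho_cont.comp (contDiff_init.continuous.continuousOn) (fun x hx => hx)
        exact isOpen_lt_on (gU_open ch)
            ((hf.comp hrc (fun x hx => ch.rho_mem _ hx)))
            ((continuous_apply (Fin.last n')).continuousOn)
      · intro x hx t; simp only [ch.rho_Phi _ hx]
      · intro x hx t; simp only [ch.rho_Psi _ hx]
      · intro x hx t; simp only [ch.rho_PiE]
      · constructor
        · rintro ⟨h1, h2⟩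
          refine ⟨h1, ?_⟩
          simp only [ch.rho_id _ h1]
          exact h2
        · rintro ⟨h1, h2⟩
          simp only [ch.rho_id _ h1] at h2
          exact ⟨h1, h2⟩
  | @bandAll n' k' C' hcell ih =>
      obtain ⟨ch⟩ := ih
      refine ⟨bandCore ch (fun _ _ => True) ?_ ?_ ?_ ?_ _ fun x => ?_⟩
      · have hset : bU ch (fun _ _ => True) = gU ch := by
          ext x; simp [bU, gU]
        rw [hset]
        exact gU_open ch
      · intro x hx t; rfl
      · intro x hx t; rfl
      · intro x hx t; rfl
      · simp only [mem_setOf_eq, and_true]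

end CellSub

namespace CellSub
open Set Metric

variable {n k : ℕ}

def projE (e : Fin n ≃ Fin n) (hkn : k ≤ n) : (Fin n → ℝ) → (Fin k → ℝ) :=
  fun y j => y (e.symm (Fin.castLE hkn j))

def secE (e : Fin n ≃ Fin n) (k : ℕ) : (Fin k → ℝ) → (Fin n → ℝ) :=
  fun v i => if h : ((e i : ℕ)) < k then v ⟨(e i : ℕ), h⟩ else 0

lemma secE_mem_QS (e : Fin n ≃ Fin n) (k : ℕ) (v : Fin k → ℝ) : secE e k v ∈ QS e k := by
  intro i hi
  simp only [secE]
  rw [dif_neg (by omega)]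

lemma projE_secE (e : Fin n ≃ Fin n) (hkn : k ≤ n) (v : Fin k → ℝ) :
    projE e hkn (secE e k v) = v := by
  funext j
  simp only [projE, secE, Equiv.apply_symm_apply]
  rw [dif_pos (show ((Fin.castLE hkn j : Fin n) : ℕ) < k from j.isLt)]
  congr 1

lemma secE_projE (e : Fin n ≃ Fin n) (hkn : k ≤ n) {y : Fin n → ℝ} (hy : y ∈ QS e k) :
    secE e k (projE e hkn y) = y := by
  funext i
  simp only [secE, projE]
  by_cases h : ((e i : ℕ)) < k
  · rw [dif_pos h]
    have : Fin.castLE hkn (⟨(e i : ℕ), h⟩ : Fin k) = e i := by apply Fin.ext; rfl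
    rw [this, Equiv.symm_apply_apply]
  · rw [dif_neg h]
    exact (hy i (by omega)).symm

lemma continuous_projE (e : Fin n ≃ Fin n) (hkn : k ≤ n) : Continuous (projE e hkn) :=
  continuous_pi fun j => continuous_apply _

lemma continuous_secE (e : Fin n ≃ Fin n) (k : ℕ) : Continuous (secE e k) := by
  apply continuous_pi
  intro i
  by_cases h : ((e i : ℕ)) < k
  · simp only [secE, dif_pos h]
    exact continuous_apply _
  · simp only [secE, dif_neg h]
    exact continuous_const

/-- the homeomorphism between `C` and an open subset of `ℝᵏ` built from a chart. -/
def chartHomeo {C : Set (Fin n → ℝ)} (ch : Chart n k C) :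
    ↥C ≃ₜ ↥(secE ch.e k ⁻¹' ch.U) where
  toFun x := ⟨projE ch.e ch.hkn (ch.Φ ↑x), by
    have hxU : (x : Fin n → ℝ) ∈ ch.U := ch.hCU x.2
    have hQ : ch.Φ ↑x ∈ QS ch.e k := (ch.hCiff _ hxU).mp x.2
    show secE ch.e k _ ∈ ch.U
    rw [secE_projE ch.e ch.hkn hQ]
    exact ch.hΦmem _ hxU⟩
  invFun v := ⟨ch.Ψ (secE ch.e k ↑v), by
    have h1 : secE ch.e k ↑v ∈ ch.U ∩ QS ch.e k := ⟨v.2, secE_mem_QS _ _ _⟩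
    rw [← ch.himg] at h1
    obtain ⟨z, hzC, hEq⟩ := h1
    rw [← hEq, ch.hinv z (ch.hCU hzC)]
    exact hzC⟩
  left_inv x := by
    apply Subtype.ext
    show ch.Ψ (secE ch.e k (projE ch.e ch.hkn (ch.Φ ↑x))) = ↑x
    have hxU : (x : Fin n → ℝ) ∈ ch.U := ch.hCU x.2
    rw [secE_projE ch.e ch.hkn ((ch.hCiff _ hxU).mp x.2)]
    exact ch.hinv _ hxU
  right_inv v := by
    apply Subtype.ext
    show projE ch.e ch.hkn (ch.Φ (ch.Ψ (secE ch.e k ↑v))) = ↑v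
    rw [(ch.hΨU _ v.2).2]
    exact projE_secE ch.e ch.hkn ↑v
  continuous_toFun := by
    apply Continuous.subtype_mk
    apply (continuous_projE ch.e ch.hkn).comp
    exact ch.hΦc.comp_continuous continuous_subtype_val (fun x => ch.hCU x.2)
  continuous_invFun := by
    apply Continuous.subtype_mk
    apply ch.hΨc.comp_continuous
    · exact (continuous_secE ch.e k).comp continuous_subtype_val
    · exact fun v => v.2

theorem part1 {S : RealStructure} {n k : ℕ} {C : Set (Fin n → ℝ)}
    (h : IsCell S n k C) : ∀ p ∈ C, ∃ U : Set (Fin n → ℝ), IsOpen U ∧ p ∈ U ∧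
      ∃ V : Set (Fin k → ℝ), IsOpen V ∧ Nonempty (↥(C ∩ U) ≃ₜ ↥V) := by
  intro p hp
  obtain ⟨ch⟩ := isCell_chart h
  refine ⟨univ, isOpen_univ, mem_univ p, secE ch.e k ⁻¹' ch.U,
    ch.hUo.preimage (continuous_secE ch.e k), ?_⟩
  rw [Set.inter_univ]
  exact ⟨chartHomeo ch⟩

end CellSub

namespace CellSub
open Set Metric

variable {n k : ℕ} {C' : Set (Fin n → ℝ)}

lemma exists_closedBall_subset {D : Set (Fin n → ℝ)} (hD : IsOpen D) {c : Fin n → ℝ}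
    (hc : c ∈ D) : ∃ r, 0 < r ∧ closedBall c r ⊆ D := by
  obtain ⟨ε, hε, hb⟩ := Metric.isOpen_iff.mp hD c hc
  exact ⟨ε/2, by positivity, (closedBall_subset_ball (by linarith)).trans hb⟩

lemma Chart.rho_cd (ch : Chart n k C') (hΨd : ContDiffOn ℝ 1 ch.Ψ ch.U) :
    ContDiffOn ℝ 1 ch.rho ch.U := by
  have : ch.rho = ch.Ψ ∘ (PiE ch.e k) := rfl
  rw [this]
  exact hΨd.comp ((contDiff_PiE ch.e k).contDiffOn) (fun x hx => ch.hPiU x hx)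

/-- C¹ extension of a `C1On`-function to the chart domain. -/
lemma Chart.extend1 (ch : Chart n k C') (hΨd : ContDiffOn ℝ 1 ch.Ψ ch.U)
    {f : (Fin n → ℝ) → ℝ} (h1 : C1On f C') :
    ∃ fh : (Fin n → ℝ) → ℝ, ContDiffOn ℝ 1 fh ch.U ∧ (∀ x ∈ C', fh x = f x) ∧
      (∀ x ∈ ch.U, fh (ch.Φ x) = fh x) ∧ (∀ x ∈ ch.U, fh (ch.Ψ x) = fh x) ∧
      (∀ x, fh (PiE ch.e k x) = fh x) ∧ (∀ x ∈ ch.U, fh x = f (ch.rho x)) := by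
  obtain ⟨W, hWo, hCW, F, hFd, hfF⟩ := h1
  refine ⟨fun x => F (ch.rho x), ?_, ?_, ?_, ?_, ?_, ?_⟩
  · exact hFd.comp (ch.rho_cd hΨd) (fun x hx => hCW (ch.rho_mem x hx))
  · intro x hx
    show F (ch.rho x) = f x
    rw [ch.rho_id x hx]
    exact (hfF hx).symm
  · intro x hx; simp only [ch.rho_Phi x hx]
  · intro x hx; simp only [ch.rho_Psi x hx]
  · intro x; simp only [ch.rho_PiE]
  · intro x hx
    exact (hfF (ch.rho_mem x hx)).symm

section GraphCore1

variable (ch : Chart n k C') (fh : (Fin n → ℝ) → ℝ)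

lemma gPhi_cd (hΦd : ContDiffOn ℝ 1 ch.Φ ch.U) (hfhd : ContDiffOn ℝ 1 fh ch.U) :
    ContDiffOn ℝ 1 (gPhi ch fh) (gU ch) := by
  apply contDiffOn_snoc
  · exact hΦd.comp (contDiff_init.contDiffOn) (fun x hx => hx)
  · exact ((ContinuousLinearMap.proj (R := ℝ) (φ := fun _ : Fin (n+1) => ℝ)
      (Fin.last n)).contDiff.contDiffOn).sub
      (hfhd.comp (contDiff_init.contDiffOn) (fun x hx => hx))

lemma gPsi_cd (hΨd : ContDiffOn ℝ 1 ch.Ψ ch.U) (hfhd : ContDiffOn ℝ 1 fh ch.U) :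
    ContDiffOn ℝ 1 (gPsi ch fh) (gU ch) := by
  have hA : ContDiffOn ℝ 1 (fun x : Fin (n+1) → ℝ => ch.Ψ (Fin.init x)) (gU ch) :=
    hΨd.comp (contDiff_init.contDiffOn) (fun x hx => hx)
  apply contDiffOn_snoc hA
  exact ((ContinuousLinearMap.proj (R := ℝ) (φ := fun _ : Fin (n+1) => ℝ)
      (Fin.last n)).contDiff.contDiffOn).add
      (hfhd.comp hA (fun x hx => (ch.hΨU _ hx).1))

def graphCore1 (ch1 : Chart1 n k C') (fh : (Fin n → ℝ) → ℝ)
    (hfhd : ContDiffOn ℝ 1 fh ch1.toChart.U)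
    (CG : Set (Fin (n+1) → ℝ))
    (hCG : ∀ x, x ∈ CG ↔ (Fin.init x ∈ C' ∧ x (Fin.last n) = fh (Fin.init x))) :
    Chart1 (n+1) k CG where
  toChart := graphCore ch1.toChart fh hfhd.continuousOn CG hCG
  hΦd := gPhi_cd ch1.toChart fh ch1.hΦd hfhd
  hΨd := gPsi_cd ch1.toChart fh ch1.hΨd hfhd

lemma LB_graph (hfh : ContinuousOn fh ch.U)
    (CG : Set (Fin (n+1) → ℝ))
    (hCG : ∀ x, x ∈ CG ↔ (Fin.init x ∈ C' ∧ x (Fin.last n) = fh (Fin.init x)))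
    (hLB : LB ch) : LB (graphCore ch fh hfh CG hCG) := by
  rcases hLB with ⟨c, r, hr, hcP, hball⟩ | ⟨s, δ, hδ, hsP, hblob⟩
  · left
    refine ⟨Fin.snoc c 0, r, hr, ?_, ?_⟩
    · intro j hj
      induction j using Fin.lastCases with
      | last => simp
      | cast i =>
          rw [Fin.snoc_castSucc]
          exact hcP i (by simpa using hj)
    · intro x hx
      show Fin.init x ∈ ch.U
      apply hball
      have := dist_init_le x (Fin.snoc c 0)
      rw [Fin.init_snoc] at this
      exact le_trans this hx
  · right
    refine ⟨Fin.snoc s 0, δ, hδ, ?_, ?_⟩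
    · intro j hj
      induction j using Fin.lastCases with
      | last => simp
      | cast i =>
          rw [Fin.snoc_castSucc]
          exact hsP i (by simpa using hj)
    · intro x hx
      have hinit : Fin.init x ∈ ball s δ := by
        have := dist_init_le x (Fin.snoc s 0)
        rw [Fin.init_snoc] at this
        exact lt_of_le_of_lt this hx
      obtain ⟨hC, hQ⟩ := hblob _ hinit
      constructor
      · intro hxC
        exact hC ((hCG x).mp hxC).1
      · intro hxQ
        apply hQ
        intro i hi
        exact hxQ (Fin.castSucc i) (by
          show k ≤ ((graphEquiv ch.e (Fin.castSucc i) : Fin (n+1)) : ℕ)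
          rw [graphEquiv_castSucc]; simpa using hi)

end GraphCore1

section BandCore1

variable (ch : Chart n k C')

lemma bPhi_cd (hΦd : ContDiffOn ℝ 1 ch.Φ ch.U) {R : (Fin n → ℝ) → ℝ → Prop} :
    ContDiffOn ℝ 1 (bPhi ch) (bU ch R) := by
  apply contDiffOn_snoc
  · exact hΦd.comp (contDiff_init.contDiffOn) (fun x hx => hx.1)
  · exact (ContinuousLinearMap.proj (R := ℝ) (φ := fun _ : Fin (n+1) => ℝ)
      (Fin.last n)).contDiff.contDiffOn

lemma bPsi_cd (hΨd : ContDiffOn ℝ 1 ch.Ψ ch.U) {R : (Fin n → ℝ) → ℝ → Prop} :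
    ContDiffOn ℝ 1 (bPsi ch) (bU ch R) := by
  apply contDiffOn_snoc
  · exact hΨd.comp (contDiff_init.contDiffOn) (fun x hx => hx.1)
  · exact (ContinuousLinearMap.proj (R := ℝ) (φ := fun _ : Fin (n+1) => ℝ)
      (Fin.last n)).contDiff.contDiffOn

def bandCore1 (ch1 : Chart1 n k C') (R : (Fin n → ℝ) → ℝ → Prop)
    (hRopen : IsOpen (bU ch1.toChart R))
    (hRΦ : ∀ x ∈ ch1.toChart.U, ∀ t, R x t ↔ R (ch1.toChart.Φ x) t)
    (hRΨ : ∀ x ∈ ch1.toChart.U, ∀ t, R x t ↔ R (ch1.toChart.Ψ x) t)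
    (hRPi : ∀ x ∈ ch1.toChart.U, ∀ t, R x t ↔ R (PiE ch1.toChart.e k x) t)
    (CB : Set (Fin (n+1) → ℝ))
    (hCB : ∀ x, x ∈ CB ↔ (Fin.init x ∈ C' ∧ R (Fin.init x) (x (Fin.last n)))) :
    Chart1 (n+1) (k+1) CB where
  toChart := bandCore ch1.toChart R hRopen hRΦ hRΨ hRPi CB hCB
  hΦd := bPhi_cd ch1.toChart ch1.hΦd
  hΨd := bPsi_cd ch1.toChart ch1.hΨd

lemma exists_good_point {c : Fin n → ℝ} {r : ℝ} (hr : 0 < r) (hcP : c ∈ PL n k)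
    (hball : closedBall c r ⊆ ch.U) (hkn' : k < n) :
    ∃ u, u ∈ ch.U ∧ (∀ j : Fin n, k + 1 ≤ (j : ℕ) → u j = 0) ∧ u ∉ C' ∧ u ∉ QS ch.e k := by
  -- pigeonhole: some slot `i₀ ≤ k` is a graph slot
  obtain ⟨i₀, hi₀k, hi₀G⟩ : ∃ i : Fin n, (i : ℕ) < k + 1 ∧ k ≤ ((ch.e i : ℕ)) := by
    by_contra hcon
    push_neg at hcon
    have hinj : Function.Injective
        (fun j : Fin (k+1) => (⟨((ch.e (Fin.castLE hkn' j) : ℕ)),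
          hcon (Fin.castLE hkn' j) (by simpa using j.isLt)⟩ : Fin k)) := by
      intro a b hab
      have h1 := congrArg Fin.val hab
      simp only [] at h1
      have h2 : ch.e (Fin.castLE hkn' a) = ch.e (Fin.castLE hkn' b) := Fin.ext h1
      have h3 := ch.e.injective h2
      have h4 := congrArg Fin.val h3
      simp only [Fin.coe_castLE] at h4
      exact Fin.ext h4
    have := Fintype.card_le_of_injective _ hinj
    simp at this
  set u : ℝ → (Fin n → ℝ) := fun t => Function.update c i₀ (c i₀ + t) with hu
  have humem : ∀ t : ℝ, 0 ≤ t → t ≤ r → u t ∈ closedBall c r := by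
    intro t ht0 htr
    rw [mem_closedBall]
    refine (dist_pi_le_iff (by linarith)).mpr fun j => ?_
    by_cases hj : j = i₀
    · subst hj
      simp only [hu, Function.update_self]
      rw [Real.dist_eq]
      simp only [add_sub_cancel_left]
      rw [abs_of_nonneg ht0]
      exact htr
    · simp only [hu, Function.update_of_ne hj]
      simp [ht0, htr]
      linarith
  have huP : ∀ t, ∀ j : Fin n, k + 1 ≤ (j : ℕ) → u t j = 0 := by
    intro t j hj
    have hne : j ≠ i₀ := by
      intro h; subst h; omega
    simp only [hu, Function.update_of_ne hne]
    exact hcP j (by omega)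
  have hCuniq : ∀ t t' : ℝ, u t ∈ C' → u t' ∈ C' → t = t' := by
    intro t t' ht ht'
    have hPiEq : PiE ch.e k (u t) = PiE ch.e k (u t') := by
      apply PiE_eq_of_agree
      intro i hi
      have hne : i ≠ i₀ := by
        intro h; subst h; omega
      simp only [hu, Function.update_of_ne hne]
    have h1 : u t = u t' := by
      have e1 := ch.rho_id _ ht
      have e2 := ch.rho_id _ ht'
      rw [← e1, ← e2]
      unfold Chart.rho
      rw [hPiEq]
    have := congrFun h1 i₀
    simp only [hu, Function.update_self] at this
    linarith
  have hQuniq : ∀ t t' : ℝ, u t ∈ QS ch.e k → u t' ∈ QS ch.e k → t = t' := by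
    intro t t' ht ht'
    have h1 := ht i₀ hi₀G
    have h2 := ht' i₀ hi₀G
    simp only [hu, Function.update_self] at h1 h2
    linarith
  have hmem : ∀ t : ℝ, 0 < t → t ≤ r → u t ∈ ch.U := by
    intro t ht htr
    exact hball (humem t ht.le htr)
  have h2r : (0:ℝ) < r/2 := by linarith
  by_cases h1 : u (r/2) ∈ C'
  · by_cases h2 : u (r/4) ∈ QS ch.e k
    · refine ⟨u (r/8), hmem _ (by linarith) (by linarith), huP _, ?_, ?_⟩
      · intro h; have := hCuniq _ _ h h1; linarith
      · intro h; have := hQuniq _ _ h h2; linarith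
    · refine ⟨u (r/4), hmem _ (by linarith) (by linarith), huP _, ?_, h2⟩
      intro h; have := hCuniq _ _ h h1; linarith
  · by_cases h2 : u (r/2) ∈ QS ch.e k
    · by_cases h3 : u (r/4) ∈ C'
      · refine ⟨u (r/8), hmem _ (by linarith) (by linarith), huP _, ?_, ?_⟩
        · intro h; have := hCuniq _ _ h h3; linarith
        · intro h; have := hQuniq _ _ h h2; linarith
      · refine ⟨u (r/4), hmem _ (by linarith) (by linarith), huP _, h3, ?_⟩
        intro h; have := hQuniq _ _ h h2; linarith
    · exact ⟨u (r/2), hmem _ (by linarith) (by linarith), huP _, h1, h2⟩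

lemma LB_band (R : (Fin n → ℝ) → ℝ → Prop)
    (hRopen : IsOpen (bU ch R))
    (hRΦ : ∀ x ∈ ch.U, ∀ t, R x t ↔ R (ch.Φ x) t)
    (hRΨ : ∀ x ∈ ch.U, ∀ t, R x t ↔ R (ch.Ψ x) t)
    (hRPi : ∀ x ∈ ch.U, ∀ t, R x t ↔ R (PiE ch.e k x) t)
    (CB : Set (Fin (n+1) → ℝ))
    (hCB : ∀ x, x ∈ CB ↔ (Fin.init x ∈ C' ∧ R (Fin.init x) (x (Fin.last n))))
    (hRpt : ∀ x ∈ ch.U, ∃ t, R x t)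
    (hLB : LB ch) : LB (bandCore ch R hRopen hRΦ hRΨ hRPi CB hCB) := by
  rcases hLB with ⟨c, r, hr, hcP, hball⟩ | ⟨s, δ, hδ, hsP, hblob⟩
  · by_cases hkn' : k < n
    · -- blob via a good point
      obtain ⟨v, hvU, hvP, hvC, hvQ⟩ := exists_good_point ch hr hcP hball hkn'
      obtain ⟨η₁, hη₁, hb1⟩ := Metric.isOpen_iff.mp ch.isOpen_diff v ⟨hvU, hvC⟩
      obtain ⟨η₂, hη₂, hb2⟩ :=
        Metric.isOpen_iff.mp (Chart.isClosed_QS ch.e k).isOpen_compl v hvQ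
      right
      refine ⟨Fin.snoc v 0, min η₁ η₂, by positivity, ?_, ?_⟩
      · intro j hj
        induction j using Fin.lastCases with
        | last => simp
        | cast i =>
            rw [Fin.snoc_castSucc]
            exact hvP i (by simpa using hj)
      · intro x hx
        have hinit : Fin.init x ∈ ball v (min η₁ η₂) := by
          have := dist_init_le x (Fin.snoc v 0)
          rw [Fin.init_snoc] at this
          exact lt_of_le_of_lt this hx
        constructor
        · intro hxC
          have h1 : Fin.init x ∈ C' := ((hCB x).mp hxC).1
          have h2 := hb1 (mem_of_mem_of_subset hinit (ball_subset_ball (min_le_left _ _)))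
          exact h2.2 h1
        · intro hxQ
          have h1 : Fin.init x ∈ QS ch.e k := by
            intro i hi
            exact hxQ (Fin.castSucc i) (by
              show k+1 ≤ ((bandEquiv ch.e k ch.hkn (Fin.castSucc i) : Fin (n+1)) : ℕ)
              rw [bandEquiv_cond]; exact hi)
          have h2 := hb2 (mem_of_mem_of_subset hinit (ball_subset_ball (min_le_right _ _)))
          exact h2 h1
    · -- k = n : interior point
      have hcU : c ∈ ch.U := hball (mem_closedBall_self hr.le)
      obtain ⟨t₀, ht₀⟩ := hRpt c hcU
      have hmem : (Fin.snoc c t₀ : Fin (n+1) → ℝ) ∈ bU ch R := by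
        constructor
        · simp only [Fin.init_snoc]; exact hcU
        · simp only [Fin.init_snoc, Fin.snoc_last]; exact ht₀
      obtain ⟨r', hr', hsub⟩ := exists_closedBall_subset hRopen hmem
      left
      refine ⟨Fin.snoc c t₀, r', hr', ?_, hsub⟩
      intro j hj
      exfalso
      have := j.isLt
      have hkn := ch.hkn
      omega
  · right
    refine ⟨Fin.snoc s 0, δ, hδ, ?_, ?_⟩
    · intro j hj
      induction j using Fin.lastCases with
      | last => simp
      | cast i =>
          rw [Fin.snoc_castSucc]
          exact hsP i (by simp at hj ⊢; omega)
    · intro x hx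
      have hinit : Fin.init x ∈ ball s δ := by
        have := dist_init_le x (Fin.snoc s 0)
        rw [Fin.init_snoc] at this
        exact lt_of_le_of_lt this hx
      obtain ⟨hC, hQ⟩ := hblob _ hinit
      constructor
      · intro hxC
        exact hC ((hCB x).mp hxC).1
      · intro hxQ
        apply hQ
        intro i hi
        exact hxQ (Fin.castSucc i) (by
          show k+1 ≤ ((bandEquiv ch.e k ch.hkn (Fin.castSucc i) : Fin (n+1)) : ℕ)
          rw [bandEquiv_cond]; exact hi)

end BandCore1

end CellSub

namespace CellSub
open Set Metric

variable {n k : ℕ}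

theorem isC1Cell_chart {S : RealStructure} {n k : ℕ} {C : Set (Fin n → ℝ)}
    (h : IsC1Cell S n k C) : C = ∅ ∨ ∃ ch : Chart1 n k C, LB ch.toChart := by
  induction h with
  | point a =>
      right
      refine ⟨⟨pointChart a, ?_, ?_⟩, ?_⟩
      · show ContDiffOn ℝ 1 (fun (x : Fin 1 → ℝ) (j : Fin 1) => x j - a) univ
        exact (contDiff_pi.mpr fun j =>
          ((ContinuousLinearMap.proj (R := ℝ) (φ := fun _ : Fin 1 => ℝ) j).contDiff).sub
            contDiff_const).contDiffOn
      · show ContDiffOn ℝ 1 (fun (x : Fin 1 → ℝ) (j : Fin 1) => x j + a) univ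
        exact (contDiff_pi.mpr fun j =>
          ((ContinuousLinearMap.proj (R := ℝ) (φ := fun _ : Fin 1 => ℝ) j).contDiff).add
            contDiff_const).contDiffOn
      · left
        exact ⟨(fun _ => 0), 1, one_pos, fun j _ => rfl, subset_univ _⟩
  | interval a b =>
      by_cases hab : a < b
      · right
        refine ⟨⟨intervalChart _ ((isOpen_lt continuous_const (continuous_apply 0)).inter
            (isOpen_lt (continuous_apply 0) continuous_const)), contDiffOn_id, contDiffOn_id⟩, ?_⟩
        left
        have hc : (fun _ : Fin 1 => (a+b)/2) ∈ {x : Fin 1 → ℝ | a < x 0 ∧ x 0 < b} := by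
          constructor
          · show a < (a+b)/2; linarith
          · show (a+b)/2 < b; linarith
        obtain ⟨r, hr, hsub⟩ := exists_closedBall_subset
          ((isOpen_lt continuous_const (continuous_apply 0)).inter
            (isOpen_lt (continuous_apply 0) continuous_const)) hc
        exact ⟨_, r, hr, fun j hj => absurd hj (by have := j.isLt; omega), hsub⟩
      · left
        ext x
        simp only [mem_setOf_eq, mem_empty_iff_false, iff_false, not_and, not_lt]
        intro h1
        linarith
  | intervalLeft b =>
      right
      refine ⟨⟨intervalChart _ (isOpen_lt (continuous_apply 0) continuous_const),
        contDiffOn_id, contDiffOn_id⟩, ?_⟩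
      left
      have hc : (fun _ : Fin 1 => b - 1) ∈ {x : Fin 1 → ℝ | x 0 < b} := by
        show b - 1 < b; linarith
      obtain ⟨r, hr, hsub⟩ := exists_closedBall_subset
        (isOpen_lt (continuous_apply 0) continuous_const) hc
      exact ⟨_, r, hr, fun j hj => absurd hj (by have := j.isLt; omega), hsub⟩
  | intervalRight a =>
      right
      refine ⟨⟨intervalChart _ (isOpen_lt continuous_const (continuous_apply 0)),
        contDiffOn_id, contDiffOn_id⟩, ?_⟩
      left
      have hc : (fun _ : Fin 1 => a + 1) ∈ {x : Fin 1 → ℝ | a < x 0} := by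
        show a < a + 1; linarith
      obtain ⟨r, hr, hsub⟩ := exists_closedBall_subset
        (isOpen_lt continuous_const (continuous_apply 0)) hc
      exact ⟨_, r, hr, fun j hj => absurd hj (by have := j.isLt; omega), hsub⟩
  | intervalAll =>
      right
      refine ⟨⟨intervalChart _ isOpen_univ, contDiffOn_id, contDiffOn_id⟩, ?_⟩
      left
      exact ⟨(fun _ => 0), 1, one_pos, fun j hj => absurd hj (by have := j.isLt; omega),
        subset_univ _⟩
  | @graph n' k' C' f hcell hf h1 hdef ih =>
      rcases ih with hE | ⟨ch1, hLB⟩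
      · left
        apply Set.eq_empty_iff_forall_notMem.mpr
        rintro x ⟨hx1, -⟩
        rw [hE] at hx1
        exact absurd hx1 (Set.notMem_empty _)
      · right
        obtain ⟨fh, hfhd, hfhC, hfhΦ, hfhΨ, hfhPi, hfhrho⟩ := ch1.toChart.extend1 ch1.hΨd h1
        have hCG : ∀ x : Fin (n'+1) → ℝ,
            x ∈ {x : Fin (n'+1) → ℝ | Fin.init x ∈ C' ∧ x (Fin.last n') = f (Fin.init x)} ↔
            (Fin.init x ∈ C' ∧ x (Fin.last n') = fh (Fin.init x)) := by
          intro x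
          constructor
          · rintro ⟨ha, hb⟩
            exact ⟨ha, by rw [hfhC _ ha]; exact hb⟩
          · rintro ⟨ha, hb⟩
            exact ⟨ha, by rw [← hfhC _ ha]; exact hb⟩
        exact ⟨graphCore1 ch1 fh hfhd _ hCG,
          LB_graph ch1.toChart fh hfhd.continuousOn _ hCG hLB⟩
  | @band n' k' C' f g hcell hf hg h1f h1g hdf hdg hfg ih =>
      rcases ih with hE | ⟨ch1, hLB⟩
      · left
        apply Set.eq_empty_iff_forall_notMem.mpr
        rintro x ⟨hx1, -⟩
        rw [hE] at hx1
        exact absurd hx1 (Set.notMem_empty _)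
      · right
        obtain ⟨fh, hfhd, hfhC, hfhΦ, hfhΨ, hfhPi, hfhrho⟩ := ch1.toChart.extend1 ch1.hΨd h1f
        obtain ⟨gh, hghd, hghC, hghΦ, hghΨ, hghPi, hghrho⟩ := ch1.toChart.extend1 ch1.hΨd h1g
        set ch := ch1.toChart with hch
        have hRopen : IsOpen (bU ch (fun x' t => fh x' < t ∧ t < gh x')) := by
          have hset : bU ch (fun x' t => fh x' < t ∧ t < gh x')
              = {x | x ∈ gU ch ∧ fh (Fin.init x) < x (Fin.last n')}
                ∩ {x | x ∈ gU ch ∧ x (Fin.last n') < gh (Fin.init x)} := by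
            ext x
            simp only [bU, gU, mem_setOf_eq, mem_inter_iff]
            tauto
          rw [hset]
          have hic : ContinuousOn (fun x : Fin (n'+1) → ℝ => Fin.init x) (gU ch) :=
            contDiff_init.continuous.continuousOn
          exact (isOpen_lt_on (gU_open ch)
              (hfhd.continuousOn.comp hic (fun x hx => hx))
              ((continuous_apply (Fin.last n')).continuousOn)).inter
            (isOpen_lt_on (gU_open ch)
              ((continuous_apply (Fin.last n')).continuousOn)
              (hghd.continuousOn.comp hic (fun x hx => hx)))
        have hRΦ : ∀ x ∈ ch.U, ∀ t, (fh x < t ∧ t < gh x) ↔ (fh (ch.Φ x) < t ∧ t < gh (ch.Φ x)) := by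
          intro x hx t; rw [hfhΦ _ hx, hghΦ _ hx]
        have hRΨ : ∀ x ∈ ch.U, ∀ t, (fh x < t ∧ t < gh x) ↔ (fh (ch.Ψ x) < t ∧ t < gh (ch.Ψ x)) := by
          intro x hx t; rw [hfhΨ _ hx, hghΨ _ hx]
        have hRPi : ∀ x ∈ ch.U, ∀ t,
            (fh x < t ∧ t < gh x) ↔ (fh (PiE ch.e k' x) < t ∧ t < gh (PiE ch.e k' x)) := by
          intro x hx t; rw [hfhPi, hghPi]
        have hCB : ∀ x : Fin (n'+1) → ℝ,
            x ∈ {x : Fin (n'+1) → ℝ | Fin.init x ∈ C' ∧ f (Fin.init x) < x (Fin.last n')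
              ∧ x (Fin.last n') < g (Fin.init x)} ↔
            (Fin.init x ∈ C' ∧ (fh (Fin.init x) < x (Fin.last n')
              ∧ x (Fin.last n') < gh (Fin.init x))) := by
          intro x
          constructor
          · rintro ⟨ha, hb, hc2⟩
            exact ⟨ha, by rw [hfhC _ ha]; exact hb, by rw [hghC _ ha]; exact hc2⟩
          · rintro ⟨ha, hb, hc2⟩
            rw [hfhC _ ha] at hb
            rw [hghC _ ha] at hc2
            exact ⟨ha, hb, hc2⟩
        have hRpt : ∀ x ∈ ch.U, ∃ t, fh x < t ∧ t < gh x := by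
          intro x hx
          have h1 : fh x < gh x := by
            rw [hfhrho _ hx, hghrho _ hx]
            exact hfg _ (ch.rho_mem _ hx)
          exact ⟨(fh x + gh x)/2, by linarith, by linarith⟩
        exact ⟨bandCore1 ch1 _ hRopen hRΦ hRΨ hRPi _ hCB,
          LB_band ch _ hRopen hRΦ hRΨ hRPi _ hCB hRpt hLB⟩
  | @bandLeft n' k' C' g hcell hg h1g hdef ih =>
      rcases ih with hE | ⟨ch1, hLB⟩
      · left
        apply Set.eq_empty_iff_forall_notMem.mpr
        rintro x ⟨hx1, -⟩
        rw [hE] at hx1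
        exact absurd hx1 (Set.notMem_empty _)
      · right
        obtain ⟨gh, hghd, hghC, hghΦ, hghΨ, hghPi, hghrho⟩ := ch1.toChart.extend1 ch1.hΨd h1g
        set ch := ch1.toChart with hch
        have hRopen : IsOpen (bU ch (fun x' t => t < gh x')) := by
          have hset : bU ch (fun x' t => t < gh x')
              = {x | x ∈ gU ch ∧ x (Fin.last n') < gh (Fin.init x)} := by
            ext x; simp only [bU, gU, mem_setOf_eq]
          rw [hset]
          exact isOpen_lt_on (gU_open ch)
              ((continuous_apply (Fin.last n')).continuousOn)
              (hghd.continuousOn.comp (contDiff_init.continuous.continuousOn) (fun x hx => hx))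
        have hRΦ : ∀ x ∈ ch.U, ∀ t, (t < gh x) ↔ (t < gh (ch.Φ x)) := by
          intro x hx t; rw [hghΦ _ hx]
        have hRΨ : ∀ x ∈ ch.U, ∀ t, (t < gh x) ↔ (t < gh (ch.Ψ x)) := by
          intro x hx t; rw [hghΨ _ hx]
        have hRPi : ∀ x ∈ ch.U, ∀ t, (t < gh x) ↔ (t < gh (PiE ch.e k' x)) := by
          intro x hx t; rw [hghPi]
        have hCB : ∀ x : Fin (n'+1) → ℝ,
            x ∈ {x : Fin (n'+1) → ℝ | Fin.init x ∈ C' ∧ x (Fin.last n') < g (Fin.init x)} ↔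
            (Fin.init x ∈ C' ∧ x (Fin.last n') < gh (Fin.init x)) := by
          intro x
          constructor
          · rintro ⟨ha, hb⟩
            exact ⟨ha, by rw [hghC _ ha]; exact hb⟩
          · rintro ⟨ha, hb⟩
            rw [hghC _ ha] at hb
            exact ⟨ha, hb⟩
        have hRpt : ∀ x ∈ ch.U, ∃ t, t < gh x := fun x _ => ⟨gh x - 1, by linarith⟩
        exact ⟨bandCore1 ch1 _ hRopen hRΦ hRΨ hRPi _ hCB,
          LB_band ch _ hRopen hRΦ hRΨ hRPi _ hCB hRpt hLB⟩
  | @bandRight n' k' C' f hcell hf h1f hdef ih =>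
      rcases ih with hE | ⟨ch1, hLB⟩
      · left
        apply Set.eq_empty_iff_forall_notMem.mpr
        rintro x ⟨hx1, -⟩
        rw [hE] at hx1
        exact absurd hx1 (Set.notMem_empty _)
      · right
        obtain ⟨fh, hfhd, hfhC, hfhΦ, hfhΨ, hfhPi, hfhrho⟩ := ch1.toChart.extend1 ch1.hΨd h1f
        set ch := ch1.toChart with hch
        have hRopen : IsOpen (bU ch (fun x' t => fh x' < t)) := by
          have hset : bU ch (fun x' t => fh x' < t)
              = {x | x ∈ gU ch ∧ fh (Fin.init x) < x (Fin.last n')} := by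
            ext x; simp only [bU, gU, mem_setOf_eq]
          rw [hset]
          exact isOpen_lt_on (gU_open ch)
              (hfhd.continuousOn.comp (contDiff_init.continuous.continuousOn) (fun x hx => hx))
              ((continuous_apply (Fin.last n')).continuousOn)
        have hRΦ : ∀ x ∈ ch.U, ∀ t, (fh x < t) ↔ (fh (ch.Φ x) < t) := by
          intro x hx t; rw [hfhΦ _ hx]
        have hRΨ : ∀ x ∈ ch.U, ∀ t, (fh x < t) ↔ (fh (ch.Ψ x) < t) := by
          intro x hx t; rw [hfhΨ _ hx]
        have hRPi : ∀ x ∈ ch.U, ∀ t, (fh x < t) ↔ (fh (PiE ch.e k' x) < t) := by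
          intro x hx t; rw [hfhPi]
        have hCB : ∀ x : Fin (n'+1) → ℝ,
            x ∈ {x : Fin (n'+1) → ℝ | Fin.init x ∈ C' ∧ f (Fin.init x) < x (Fin.last n')} ↔
            (Fin.init x ∈ C' ∧ fh (Fin.init x) < x (Fin.last n')) := by
          intro x
          constructor
          · rintro ⟨ha, hb⟩
            exact ⟨ha, by rw [hfhC _ ha]; exact hb⟩
          · rintro ⟨ha, hb⟩
            rw [hfhC _ ha] at hb
            exact ⟨ha, hb⟩
        have hRpt : ∀ x ∈ ch.U, ∃ t, fh x < t := fun x _ => ⟨fh x + 1, by linarith⟩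
        exact ⟨bandCore1 ch1 _ hRopen hRΦ hRΨ hRPi _ hCB,
          LB_band ch _ hRopen hRΦ hRΨ hRPi _ hCB hRpt hLB⟩
  | @bandAll n' k' C' hcell ih =>
      rcases ih with hE | ⟨ch1, hLB⟩
      · left
        apply Set.eq_empty_iff_forall_notMem.mpr
        intro x hx1
        rw [hE] at hx1
        exact absurd hx1 (Set.notMem_empty _)
      · right
        set ch := ch1.toChart with hch
        have hRopen : IsOpen (bU ch (fun _ _ => True)) := by
          have hset : bU ch (fun _ _ => True) = gU ch := by
            ext x; simp [bU, gU]
          rw [hset]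
          exact gU_open ch
        have hRΦ : ∀ x ∈ ch.U, ∀ t : ℝ, True ↔ True := fun _ _ _ => Iff.rfl
        have hCB : ∀ x : Fin (n'+1) → ℝ,
            x ∈ {x : Fin (n'+1) → ℝ | Fin.init x ∈ C'} ↔ (Fin.init x ∈ C' ∧ True) := by
          intro x; simp only [mem_setOf_eq, and_true]
        have hRpt : ∀ x ∈ ch.U, ∃ t : ℝ, True := fun _ _ => ⟨0, trivial⟩
        exact ⟨bandCore1 ch1 _ hRopen hRΦ hRΦ hRΦ _ hCB,
          LB_band ch _ hRopen hRΦ hRΦ hRΦ _ hCB hRpt hLB⟩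

end CellSub

namespace CellSub
open Set Metric

variable {n k : ℕ}

def Aff (e : Fin n ≃ Fin n) (c : Fin n → ℝ) (ε : ℝ) : (Fin n → ℝ) → (Fin n → ℝ) :=
  fun v j => c j + ε * v (e.symm j)

def AffInv (e : Fin n ≃ Fin n) (c : Fin n → ℝ) (ε : ℝ) : (Fin n → ℝ) → (Fin n → ℝ) :=
  fun y i => (y (e i) - c (e i)) / ε

lemma AffInv_Aff (e : Fin n ≃ Fin n) (c : Fin n → ℝ) {ε : ℝ} (hε : ε ≠ 0) (v : Fin n → ℝ) :
    AffInv e c ε (Aff e c ε v) = v := by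
  funext i
  simp only [AffInv, Aff, Equiv.symm_apply_apply]
  field_simp
  ring

lemma Aff_AffInv (e : Fin n ≃ Fin n) (c : Fin n → ℝ) {ε : ℝ} (hε : ε ≠ 0) (y : Fin n → ℝ) :
    Aff e c ε (AffInv e c ε y) = y := by
  funext j
  simp only [Aff, AffInv, Equiv.apply_symm_apply]
  field_simp
  ring

lemma contDiff_Aff (e : Fin n ≃ Fin n) (c : Fin n → ℝ) (ε : ℝ) :
    ContDiff ℝ 1 (Aff e c ε) := by
  apply contDiff_pi.mpr
  intro j
  exact contDiff_const.add (contDiff_const.mul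
    (ContinuousLinearMap.proj (R := ℝ) (φ := fun _ : Fin n => ℝ) (e.symm j)).contDiff)

lemma contDiff_AffInv (e : Fin n ≃ Fin n) (c : Fin n → ℝ) (ε : ℝ) :
    ContDiff ℝ 1 (AffInv e c ε) := by
  apply contDiff_pi.mpr
  intro i
  exact (((ContinuousLinearMap.proj (R := ℝ) (φ := fun _ : Fin n => ℝ) (e i)).contDiff).sub
    contDiff_const).div_const ε

lemma isOpenMap_Aff (e : Fin n ≃ Fin n) (c : Fin n → ℝ) {ε : ℝ} (hε : ε ≠ 0) :
    IsOpenMap (Aff e c ε) := by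
  let h : Homeomorph (Fin n → ℝ) (Fin n → ℝ) :=
    { toFun := Aff e c ε
      invFun := AffInv e c ε
      left_inv := AffInv_Aff e c hε
      right_inv := Aff_AffInv e c hε
      continuous_toFun := (contDiff_Aff e c ε).continuous
      continuous_invFun := (contDiff_AffInv e c ε).continuous }
  exact h.isOpenMap

lemma dist_Aff_le (e : Fin n ≃ Fin n) (c : Fin n → ℝ) {ε : ℝ} (hε : 0 ≤ ε) (v : Fin n → ℝ) :
    dist (Aff e c ε v) c ≤ ε * ‖v‖ := by
  refine (dist_pi_le_iff (by positivity)).mpr fun j => ?_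
  simp only [Aff, Real.dist_eq, add_sub_cancel_left, abs_mul]
  rw [abs_of_nonneg hε]
  exact mul_le_mul_of_nonneg_left (norm_le_pi_norm v (e.symm j)) hε

lemma Aff_mem_PL {e : Fin n ≃ Fin n} {c : Fin n → ℝ} {ε : ℝ} (hε : ε ≠ 0)
    (hcP : c ∈ PL n k) (v : Fin n → ℝ) : (Aff e c ε v ∈ PL n k ↔ v ∈ QS e k) := by
  constructor
  · intro hPL i hi
    have h1 := hPL (e i) hi
    simp only [Aff, Equiv.symm_apply_apply] at h1
    have h2 := hcP (e i) hi
    rw [h2, zero_add] at h1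
    exact (mul_eq_zero.mp h1).resolve_left hε
  · intro hQ j hj
    simp only [Aff]
    rw [hcP j hj, zero_add]
    rw [hQ (e.symm j) (by rw [Equiv.apply_symm_apply]; exact hj)]
    ring

end CellSub

namespace CellSub
open Set Metric

lemma part2_chart {n k : ℕ} {C : Set (Fin n → ℝ)} (ch1 : Chart1 n k C) (hLB : LB ch1.toChart)
    {p : Fin n → ℝ} (hp : p ∈ C) :
    ∃ (U V : Set (Fin n → ℝ)) (φ ψ : (Fin n → ℝ) → (Fin n → ℝ)), IsOpen U ∧ p ∈ U ∧ IsOpen V ∧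
      ContDiffOn ℝ 1 φ U ∧ ContDiffOn ℝ 1 ψ V ∧ φ '' U = V ∧
      (∀ x ∈ U, ψ (φ x) = x) ∧ (∀ y ∈ V, φ (ψ y) ∈ U ∧ φ (ψ y) = y) ∧
      φ '' (C ∩ U) = V ∩ PL n k := by
  classical
  set ch := ch1.toChart with hch
  have hpU : p ∈ ch.U := ch.hCU hp
  rcases hLB with ⟨c, r, hr, hcP, hball⟩ | ⟨s, δ, hδ, hsP, hblob⟩
  · -- LEFT case: a slice point inside the chart domain
    obtain ⟨τ, hτ, hτsub⟩ := exists_closedBall_subset ch.hUo hpU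
    obtain ⟨M₁, hM₁⟩ := (isCompact_closedBall p τ).exists_bound_of_continuousOn
      (ch.hΦc.mono hτsub)
    obtain ⟨M₂, hM₂⟩ := (isCompact_closedBall c r).exists_bound_of_continuousOn
      (ch.hΦc.mono hball)
    set M := max M₁ M₂ + 1 with hM
    have hM₁0 : 0 ≤ M₁ := le_trans (norm_nonneg _) (hM₁ p (mem_closedBall_self hτ.le))
    have hM0 : 0 < M := by
      have : (0:ℝ) ≤ max M₁ M₂ := le_trans hM₁0 (le_max_left _ _)
      linarith
    set ε := r / M with hε
    have hε0 : 0 < ε := div_pos hr hM0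
    set φf : (Fin n → ℝ) → (Fin n → ℝ) := fun x => Aff ch.e c ε (ch.Φ x) with hφf
    set ψf : (Fin n → ℝ) → (Fin n → ℝ) := fun y => ch.Ψ (AffInv ch.e c ε y) with hψf
    set Uf : Set (Fin n → ℝ) := ball p τ ∪ ball c r with hUf
    have hUfU : Uf ⊆ ch.U :=
      union_subset (ball_subset_closedBall.trans hτsub) (ball_subset_closedBall.trans hball)
    have hUfO : IsOpen Uf := isOpen_ball.union isOpen_ball
    have hcr : ∀ x ∈ Uf, φf x ∈ ball c r := by
      intro x hx
      have hb : ‖ch.Φ x‖ ≤ max M₁ M₂ := by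
        rcases hx with hx | hx
        · exact le_trans (hM₁ x (ball_subset_closedBall hx)) (le_max_left _ _)
        · exact le_trans (hM₂ x (ball_subset_closedBall hx)) (le_max_right _ _)
      have h1 : dist (φf x) c ≤ ε * ‖ch.Φ x‖ := dist_Aff_le ch.e c hε0.le _
      have h2 : ε * ‖ch.Φ x‖ ≤ ε * (max M₁ M₂) := by
        exact mul_le_mul_of_nonneg_left hb hε0.le
      have h3 : ε * (max M₁ M₂) < ε * M := by
        apply mul_lt_mul_of_pos_left _ hε0
        rw [hM]; linarith
      have h4 : ε * M = r := by
        rw [hε]; field_simp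
      rw [mem_ball]
      linarith
    set Vf := φf '' Uf with hVf
    have hVfU : Vf ⊆ Uf := by
      rintro y ⟨x, hx, rfl⟩
      exact Or.inr (hcr x hx)
    have hinvf : ∀ x ∈ Uf, ψf (φf x) = x := by
      intro x hx
      rw [hψf]
      show ch.Ψ (AffInv ch.e c ε (Aff ch.e c ε (ch.Φ x))) = x
      rw [AffInv_Aff ch.e c hε0.ne' (ch.Φ x)]
      exact ch.hinv x (hUfU hx)
    refine ⟨Uf, Vf, φf, ψf, hUfO, Or.inl (mem_ball_self hτ), ?_, ?_, ?_, rfl, hinvf, ?_, ?_⟩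
    · -- IsOpen Vf
      rw [hVf, hUf, image_union]
      have himg : ∀ O : Set (Fin n → ℝ), IsOpen O → O ⊆ ch.U → IsOpen (φf '' O) := by
        intro O hO hOU
        have : φf '' O = Aff ch.e c ε '' (ch.Φ '' O) := by
          rw [← image_comp]; rfl
        rw [this]
        exact isOpenMap_Aff ch.e c hε0.ne' _
          (image_open_of_chart ch.hUo ch.hΨc ch.hΦU ch.hinv hO hOU)
      exact (himg _ isOpen_ball (ball_subset_closedBall.trans hτsub)).union
        (himg _ isOpen_ball (ball_subset_closedBall.trans hball))
    · -- ContDiffOn φf Uf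
      exact (contDiff_Aff ch.e c ε).comp_contDiffOn (ch1.hΦd.mono hUfU)
    · -- ContDiffOn ψf Vf
      apply ch1.hΨd.comp ((contDiff_AffInv ch.e c ε).contDiffOn)
      rintro y ⟨x, hx, rfl⟩
      show AffInv ch.e c ε (Aff ch.e c ε (ch.Φ x)) ∈ ch.U
      rw [AffInv_Aff ch.e c hε0.ne']
      exact ch.hΦmem _ (hUfU hx)
    · -- right inverse
      rintro y ⟨x, hx, rfl⟩
      rw [hinvf x hx]
      exact ⟨hVfU (mem_image_of_mem _ hx), rfl⟩
    · -- straightening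
      have hiff : ∀ x ∈ Uf, (x ∈ C ↔ φf x ∈ PL n k) := by
        intro x hx
        rw [ch.hCiff x (hUfU hx)]
        exact (Aff_mem_PL hε0.ne' hcP (ch.Φ x)).symm
      apply Subset.antisymm
      · rintro y ⟨x, ⟨hxC, hxU⟩, rfl⟩
        exact ⟨mem_image_of_mem _ hxU, (hiff x hxU).mp hxC⟩
      · rintro y ⟨⟨x, hxU, rfl⟩, hPL⟩
        exact ⟨x, ⟨(hiff x hxU).mpr hPL, hxU⟩, rfl⟩
  · -- BLOB case
    have hk1 : 1 ≤ k := by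
      by_contra hk0
      have hk0' : k = 0 := by omega
      have hsQ : s ∈ QS ch.e k := by
        intro i _
        exact hsP i (by omega)
      exact (hblob s (mem_ball_self hδ)).2 hsQ
    have hn1 : 0 < n := lt_of_lt_of_le hk1 ch.hkn
    set j₀ : Fin n := ⟨0, hn1⟩ with hj₀
    obtain ⟨c, hcP, hcd, hcne⟩ : ∃ c, c ∈ PL n k ∧ dist c s ≤ δ/4 ∧ c ≠ ch.Φ p := by
      by_cases hc : ch.Φ p = s
      · refine ⟨Function.update s j₀ (s j₀ + δ/4), ?_, ?_, ?_⟩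
        · intro j hj
          have hne : j ≠ j₀ := by
            intro h
            rw [h, hj₀] at hj
            simp at hj
            omega
          rw [Function.update_of_ne hne]
          exact hsP j hj
        · refine (dist_pi_le_iff (by positivity)).mpr fun j => ?_
          by_cases hj : j = j₀
          · subst hj
            simp only [Function.update_self, Real.dist_eq, add_sub_cancel_left]
            rw [abs_of_nonneg (by positivity)]
          · simp only [Function.update_of_ne hj, dist_self]
            positivity
        · intro h
          rw [hc] at h
          have := congrFun h j₀
          rw [Function.update_self] at this
          linarith
      · exact ⟨s, hsP, by rw [dist_self]; positivity, fun h => hc h.symm⟩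
    have hcball : c ∈ ball s δ := lt_of_le_of_lt hcd (by linarith)
    have hcC : c ∉ C := (hblob c hcball).1
    set D := dist c (ch.Φ p) with hD
    have hD0 : 0 < D := dist_pos.mpr hcne
    set ρ := dist p c with hρ
    have hρ0 : 0 < ρ := dist_pos.mpr (fun h => hcC (h ▸ hp))
    set δ₂ := min (min (δ/4) (D/3)) (ρ/3) with hδ₂
    have hδ₂0 : 0 < δ₂ := by
      apply lt_min (lt_min _ _) <;> positivity
    have hδ₂a : δ₂ ≤ δ/4 := le_trans (min_le_left _ _) (min_le_left _ _)
    have hδ₂b : δ₂ ≤ D/3 := le_trans (min_le_left _ _) (min_le_right _ _)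
    have hδ₂c : δ₂ ≤ ρ/3 := min_le_right _ _
    have hB₂s : ball c δ₂ ⊆ ball s δ := by
      intro x hx
      rw [mem_ball] at hx ⊢
      calc dist x s ≤ dist x c + dist c s := dist_triangle _ _ _
        _ < δ₂ + δ/4 := by linarith [hcd]
        _ ≤ δ := by linarith
    have hcontp : ContinuousAt ch.Φ p := ch.hΦc.continuousAt (ch.hUo.mem_nhds hpU)
    obtain ⟨τ₁, hτ₁, hτ₁p⟩ := Metric.continuousAt_iff.mp hcontp (D/3) (by positivity)
    obtain ⟨τ₂, hτ₂, hτ₂sub⟩ := exists_closedBall_subset ch.hUo hpU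
    set τ := min (min τ₁ τ₂) (ρ/3) with hτdef
    have hτ0 : 0 < τ := lt_min (lt_min hτ₁ hτ₂) (by positivity)
    have hτa : τ ≤ τ₁ := le_trans (min_le_left _ _) (min_le_left _ _)
    have hτb : τ ≤ τ₂ := le_trans (min_le_left _ _) (min_le_right _ _)
    have hτc : τ ≤ ρ/3 := min_le_right _ _
    set U₁ := ball p τ with hU₁
    set B₂ := ball c δ₂ with hB₂
    have hU₁U : U₁ ⊆ ch.U := by
      intro x hx
      apply hτ₂sub
      rw [mem_closedBall]
      rw [mem_ball] at hx
      linarith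
    have hdisj : ∀ x, x ∈ B₂ → x ∉ U₁ := by
      intro x hxB hxU
      rw [hB₂, mem_ball] at hxB
      rw [hU₁, mem_ball] at hxU
      have : ρ ≤ dist p x + dist x c := dist_triangle _ _ _
      rw [dist_comm p x] at this
      linarith
    have hΦnear : ∀ x ∈ U₁, ch.Φ x ∈ ball (ch.Φ p) (D/3) := by
      intro x hx
      rw [mem_ball]
      exact hτ₁p (by rw [mem_ball] at hx; linarith)
    set Φt : (Fin n → ℝ) → (Fin n → ℝ) := fun x => if x ∈ U₁ then ch.Φ x else x with hΦt
    have hΦt1 : ∀ x ∈ U₁, Φt x = ch.Φ x := fun x hx => if_pos hx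
    have hΦt2 : ∀ x ∈ B₂, Φt x = x := fun x hx => if_neg (hdisj x hx)
    set R₁ := ‖ch.Φ p‖ + D/3 with hR₁
    set R₂ := ‖c‖ + δ₂ with hR₂
    have hbnd1 : ∀ x ∈ U₁, ‖Φt x‖ ≤ R₁ := by
      intro x hx
      rw [hΦt1 x hx]
      have h1 := hΦnear x hx
      rw [mem_ball] at h1
      have h2 : ‖ch.Φ x‖ - ‖ch.Φ p‖ ≤ ‖ch.Φ x - ch.Φ p‖ := norm_sub_norm_le _ _
      rw [← dist_eq_norm] at h2
      rw [hR₁]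
      linarith
    have hbnd2 : ∀ x ∈ B₂, ‖Φt x‖ ≤ R₂ := by
      intro x hx
      rw [hΦt2 x hx]
      have h1 : dist x c < δ₂ := hx
      have h2 : ‖x‖ - ‖c‖ ≤ ‖x - c‖ := norm_sub_norm_le _ _
      rw [← dist_eq_norm] at h2
      rw [hR₂]
      linarith
    set M := max R₁ R₂ + 1 with hM
    have hM0 : 0 < M := by
      have h1 : (0:ℝ) ≤ R₁ := by rw [hR₁]; positivity
      have : (0:ℝ) ≤ max R₁ R₂ := le_trans h1 (le_max_left _ _)
      linarith
    set ε := δ₂ / M with hε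
    have hε0 : 0 < ε := div_pos hδ₂0 hM0
    set φf : (Fin n → ℝ) → (Fin n → ℝ) := fun x => Aff ch.e c ε (Φt x) with hφf
    set Uf := U₁ ∪ B₂ with hUfd
    have hcr : ∀ x ∈ Uf, φf x ∈ B₂ := by
      intro x hx
      have hb : ‖Φt x‖ ≤ max R₁ R₂ := by
        rcases hx with hx | hx
        · exact le_trans (hbnd1 x hx) (le_max_left _ _)
        · exact le_trans (hbnd2 x hx) (le_max_right _ _)
      have h1 : dist (φf x) c ≤ ε * ‖Φt x‖ := dist_Aff_le ch.e c hε0.le _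
      have h2 : ε * ‖Φt x‖ ≤ ε * (max R₁ R₂) := mul_le_mul_of_nonneg_left hb hε0.le
      have h3 : ε * (max R₁ R₂) < ε * M := by
        apply mul_lt_mul_of_pos_left _ hε0
        rw [hM]; linarith
      have h4 : ε * M = δ₂ := by rw [hε]; field_simp
      rw [hB₂, mem_ball]
      linarith
    set Vf := φf '' Uf with hVfd
    have hVfU : Vf ⊆ Uf := by
      rintro y ⟨x, hx, rfl⟩
      exact Or.inr (hcr x hx)
    have hUfO : IsOpen Uf := isOpen_ball.union isOpen_ball
    have hz1 : ∀ x ∈ U₁, AffInv ch.e c ε (φf x) = ch.Φ x := by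
      intro x hx
      rw [hφf]
      show AffInv ch.e c ε (Aff ch.e c ε (Φt x)) = ch.Φ x
      rw [AffInv_Aff ch.e c hε0.ne', hΦt1 x hx]
    have hz2 : ∀ x ∈ B₂, AffInv ch.e c ε (φf x) = x := by
      intro x hx
      rw [hφf]
      show AffInv ch.e c ε (Aff ch.e c ε (Φt x)) = x
      rw [AffInv_Aff ch.e c hε0.ne', hΦt2 x hx]
    have hfar : ∀ x ∈ B₂, D/3 < dist x (ch.Φ p) := by
      intro x hx
      rw [hB₂, mem_ball] at hx
      have h1 : D ≤ dist c x + dist x (ch.Φ p) := dist_triangle _ _ _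
      rw [dist_comm c x] at h1
      linarith
    set ψf : (Fin n → ℝ) → (Fin n → ℝ) := fun y =>
      if AffInv ch.e c ε y ∈ ball (ch.Φ p) (D/3) then ch.Ψ (AffInv ch.e c ε y)
      else AffInv ch.e c ε y with hψf
    have hinvf : ∀ x ∈ Uf, ψf (φf x) = x := by
      intro x hx
      rcases hx with hx | hx
      · rw [hψf]
        show (if AffInv ch.e c ε (φf x) ∈ ball (ch.Φ p) (D/3) then _ else _) = x
        rw [hz1 x hx, if_pos (hΦnear x hx)]
        exact ch.hinv x (hU₁U hx)
      · rw [hψf]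
        show (if AffInv ch.e c ε (φf x) ∈ ball (ch.Φ p) (D/3) then _ else _) = x
        rw [hz2 x hx, if_neg (by rw [mem_ball]; push_neg; linarith [hfar x hx])]
    refine ⟨Uf, Vf, φf, ψf, hUfO, Or.inl (mem_ball_self hτ0), ?_, ?_, ?_, rfl, hinvf, ?_, ?_⟩
    · -- IsOpen Vf
      rw [hVfd, hUfd, image_union]
      have h1 : φf '' U₁ = Aff ch.e c ε '' (ch.Φ '' U₁) := by
        rw [← image_comp]
        apply image_congr
        intro x hx
        show φf x = Aff ch.e c ε (ch.Φ x)
        rw [hφf]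
        show Aff ch.e c ε (Φt x) = _
        rw [hΦt1 x hx]
      have h2 : φf '' B₂ = Aff ch.e c ε '' B₂ := by
        apply image_congr
        intro x hx
        show φf x = Aff ch.e c ε x
        rw [hφf]
        show Aff ch.e c ε (Φt x) = _
        rw [hΦt2 x hx]
      rw [h1, h2]
      exact (isOpenMap_Aff ch.e c hε0.ne' _
          (image_open_of_chart ch.hUo ch.hΨc ch.hΦU ch.hinv isOpen_ball hU₁U)).union
        (isOpenMap_Aff ch.e c hε0.ne' _ isOpen_ball)
    · -- ContDiffOn φf Uf
      apply contDiffOn_of_locally_contDiffOn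
      intro x hx
      rcases hx with hx | hx
      · refine ⟨U₁, isOpen_ball, hx, ?_⟩
        apply ContDiffOn.congr ((contDiff_Aff ch.e c ε).comp_contDiffOn
          ((ch1.hΦd.mono hU₁U).mono (inter_subset_right)))
        intro y hy
        show φf y = Aff ch.e c ε (ch.Φ y)
        rw [hφf]
        show Aff ch.e c ε (Φt y) = _
        rw [hΦt1 y hy.2]
      · refine ⟨B₂, isOpen_ball, hx, ?_⟩
        apply ContDiffOn.congr ((contDiff_Aff ch.e c ε).contDiffOn)
        intro y hy
        show φf y = Aff ch.e c ε y
        rw [hφf]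
        show Aff ch.e c ε (Φt y) = _
        rw [hΦt2 y hy.2]
    · -- ContDiffOn ψf Vf
      apply contDiffOn_of_locally_contDiffOn
      rintro y ⟨x, hx, rfl⟩
      rcases hx with hx | hx
      · refine ⟨AffInv ch.e c ε ⁻¹' (ball (ch.Φ p) (D/3)),
          isOpen_ball.preimage (contDiff_AffInv ch.e c ε).continuous, ?_, ?_⟩
        · show AffInv ch.e c ε (φf x) ∈ ball (ch.Φ p) (D/3)
          rw [hz1 x hx]
          exact hΦnear x hx
        · apply ContDiffOn.congr (ch1.hΨd.comp
            ((contDiff_AffInv ch.e c ε).contDiffOn) ?_)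
          · intro y hy
            exact if_pos hy.2
          · rintro y ⟨⟨x', hx', rfl⟩, hy2⟩
            rcases hx' with hx' | hx'
            · rw [hz1 x' hx']
              exact ch.hΦmem _ (hU₁U hx')
            · exfalso
              have h1 : AffInv ch.e c ε (φf x') = x' := hz2 x' hx'
              rw [mem_preimage, h1, mem_ball] at hy2
              linarith [hfar x' hx']
      · refine ⟨{z | D/3 < dist (AffInv ch.e c ε z) (ch.Φ p)}, ?_, ?_, ?_⟩
        · have : Continuous fun z => dist (AffInv ch.e c ε z) (ch.Φ p) :=
            ((contDiff_AffInv ch.e c ε).continuous).dist continuous_const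
          exact isOpen_lt continuous_const this
        · show D/3 < dist (AffInv ch.e c ε (φf x)) (ch.Φ p)
          rw [hz2 x hx]
          exact hfar x hx
        · apply ContDiffOn.congr ((contDiff_AffInv ch.e c ε).contDiffOn)
          intro y hy
          rw [hψf]
          show (if AffInv ch.e c ε y ∈ ball (ch.Φ p) (D/3) then _ else _) = _
          have h5 : D/3 < dist (AffInv ch.e c ε y) (ch.Φ p) := hy.2
          rw [if_neg (by rw [mem_ball]; push_neg; linarith)]
    · -- right inverse
      rintro y ⟨x, hx, rfl⟩
      rw [hinvf x hx]
      exact ⟨hVfU (mem_image_of_mem _ hx), rfl⟩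
    · -- straightening
      have hiff : ∀ x ∈ Uf, (x ∈ C ↔ φf x ∈ PL n k) := by
        intro x hx
        rcases hx with hx | hx
        · rw [ch.hCiff x (hU₁U hx)]
          have : φf x = Aff ch.e c ε (ch.Φ x) := by
            rw [hφf]; show Aff ch.e c ε (Φt x) = _; rw [hΦt1 x hx]
          rw [this]
          exact (Aff_mem_PL hε0.ne' hcP (ch.Φ x)).symm
        · obtain ⟨hC, hQ⟩ := hblob x (hB₂s hx)
          have : φf x = Aff ch.e c ε x := by
            rw [hφf]; show Aff ch.e c ε (Φt x) = _; rw [hΦt2 x hx]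
          rw [this]
          constructor
          · intro h; exact absurd h hC
          · intro h
            exact absurd ((Aff_mem_PL hε0.ne' hcP x).mp h) hQ
      apply Subset.antisymm
      · rintro y ⟨x, ⟨hxC, hxU⟩, rfl⟩
        exact ⟨mem_image_of_mem _ hxU, (hiff x hxU).mp hxC⟩
      · rintro y ⟨⟨x, hxU, rfl⟩, hPL⟩
        exact ⟨x, ⟨(hiff x hxU).mpr hPL, hxU⟩, rfl⟩

end CellSub

/-- a `k`-dimensional cell in `ℝⁿ` is a topological submanifold of `ℝⁿ` of
dimension `k` (every point has an ambient open neighborhood `U` with `C ∩ U` homeomorphic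
to an open subset of `ℝᵏ`); moreover, a `k`-dimensional C¹ cell is a C¹ submanifold of
dimension `k` (every point admits a local C¹ chart of `ℝⁿ` straightening `C` to a
`k`-dimensional coordinate slice). -/
theorem cell_is_submanifold (S : RealStructure) {n k : ℕ} (C : Set (Fin n → ℝ)) :
    (IsCell S n k C → ∀ p ∈ C, ∃ U : Set (Fin n → ℝ), IsOpen U ∧ p ∈ U ∧
      ∃ V : Set (Fin k → ℝ), IsOpen V ∧ Nonempty (↥(C ∩ U) ≃ₜ ↥V)) ∧
    (IsC1Cell S n k C → ∀ p ∈ C, ∃ (U V : Set (Fin n → ℝ))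
      (φ ψ : (Fin n → ℝ) → (Fin n → ℝ)), IsOpen U ∧ p ∈ U ∧ IsOpen V ∧
      ContDiffOn ℝ 1 φ U ∧ ContDiffOn ℝ 1 ψ V ∧ φ '' U = V ∧
      (∀ x ∈ U, ψ (φ x) = x) ∧ (∀ y ∈ V, φ (ψ y) ∈ U ∧ φ (ψ y) = y) ∧
      φ '' (C ∩ U) = V ∩ {y | ∀ i : Fin n, k ≤ (i : ℕ) → y i = 0}) := by
  constructor
  · intro h p hp
    exact CellSub.part1 h p hp
  · intro h p hp
    rcases CellSub.isC1Cell_chart h with hE | ⟨ch1, hLB⟩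
    · rw [hE] at hp
      exact absurd hp (Set.notMem_empty _)
    · exact CellSub.part2_chart ch1 hLB hp
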